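/- arXiv:math/0501131 — 4 statements merged into one kernel-verified Lean document; each statement's English description precedes it below -/
import Mathlib

section
/- Let ψ ∈ Ω∞. Then lim_{t→∞} ψ(2t)/ψ(t) = 1 if and only if there exists κ ∈ 𝒦 of exponential increase such that lim_{n→∞} ψ(κ(n))/ψ(κ(n+1)) = 1. -/
open MeasureTheory Filter Set

noncomputable section

/-- `f` is bounded and continuous on `[0,∞)`, i.e. (the restriction of) `f`
belongs to `C_b([0,∞))`. -/
def IsCb (f : ℝ → ℝ) : Prop :=
  ContinuousOn f (Ici 0) ∧ ∃ M : ℝ, ∀ t ∈ Ici (0:ℝ), |f t| ≤ M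

/-- Bounded real sequences, i.e. elements of `ℓ∞(ℕ)`. -/
def IsBddSeq (a : ℕ → ℝ) : Prop := ∃ M : ℝ, ∀ n, |a n| ≤ M

/-- A Banach limit on `C_b([0,∞))`: a positive linear translation-invariant
functional with `L(1) = 1`.  (The underlying map is defined on all of `ℝ → ℝ`;
the axioms only refer to its values on bounded continuous functions on `[0,∞)`.) -/
structure BanachLimitR where
  toFun : (ℝ → ℝ) → ℝ
  map_add : ∀ f g : ℝ → ℝ, IsCb f → IsCb g →
    toFun (fun t => f t + g t) = toFun f + toFun g
  map_smul : ∀ (c : ℝ) (f : ℝ → ℝ), IsCb f → toFun (fun t => c * f t) = c * toFun f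
  pos : ∀ f : ℝ → ℝ, IsCb f → (∀ t ∈ Ici (0:ℝ), 0 ≤ f t) → 0 ≤ toFun f
  map_one : toFun (fun _ => 1) = 1
  shift_inv : ∀ f : ℝ → ℝ, IsCb f → ∀ s : ℝ, 0 ≤ s → toFun (fun t => f (t + s)) = toFun f

/-- A Banach limit on `ℓ∞(ℕ)`: a positive linear shift-invariant functional
with `L'(1) = 1`. -/
structure BanachLimitN where
  toFun : (ℕ → ℝ) → ℝ
  map_add : ∀ a b : ℕ → ℝ, IsBddSeq a → IsBddSeq b →
    toFun (fun n => a n + b n) = toFun a + toFun b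
  map_smul : ∀ (c : ℝ) (a : ℕ → ℝ), IsBddSeq a → toFun (fun n => c * a n) = c * toFun a
  pos : ∀ a : ℕ → ℝ, IsBddSeq a → (∀ n, 0 ≤ a n) → 0 ≤ toFun a
  map_one : toFun (fun _ => 1) = 1
  shift_inv : ∀ a : ℕ → ℝ, IsBddSeq a → toFun (fun n => a (n + 1)) = toFun a

/-- An element of `SC_b^*([0,∞))`: a positive linear functional on `C_b([0,∞))`
with `γ(1) = 1` vanishing on `C₀([0,∞))`. -/
structure SCbStar where
  toFun : (ℝ → ℝ) → ℝ
  map_add : ∀ f g : ℝ → ℝ, IsCb f → IsCb g →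
    toFun (fun t => f t + g t) = toFun f + toFun g
  map_smul : ∀ (c : ℝ) (f : ℝ → ℝ), IsCb f → toFun (fun t => c * f t) = c * toFun f
  pos : ∀ f : ℝ → ℝ, IsCb f → (∀ t ∈ Ici (0:ℝ), 0 ≤ f t) → 0 ≤ toFun f
  map_one : toFun (fun _ => 1) = 1
  vanish : ∀ f : ℝ → ℝ, IsCb f → Tendsto f atTop (nhds 0) → toFun f = 0

/-- A positive linear functional on `C_b([0,∞))`. -/
structure PosLinFunc where
  toFun : (ℝ → ℝ) → ℝ
  map_add : ∀ f g : ℝ → ℝ, IsCb f → IsCb g →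
    toFun (fun t => f t + g t) = toFun f + toFun g
  map_smul : ∀ (c : ℝ) (f : ℝ → ℝ), IsCb f → toFun (fun t => c * f t) = c * toFun f
  pos : ∀ f : ℝ → ℝ, IsCb f → (∀ t ∈ Ici (0:ℝ), 0 ≤ f t) → 0 ≤ toFun f

/-- `ψ ∈ Ω_∞`: concave on `[0,∞)`, nonnegative, `ψ(t) → 0` as `t → 0⁺` and
`ψ(t) → ∞` as `t → ∞`. -/
def OmegaInf (ψ : ℝ → ℝ) : Prop :=
  ConcaveOn ℝ (Ici 0) ψ ∧ (∀ t ∈ Ici (0:ℝ), 0 ≤ ψ t) ∧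
    Tendsto ψ (nhdsWithin 0 (Ioi 0)) (nhds 0) ∧ Tendsto ψ atTop atTop

/-- The decreasing rearrangement `x*` of a measurable function `x` on `[0,∞)`. -/
def decRearr (x : ℝ → ℝ) (t : ℝ) : ℝ :=
  sInf {s : ℝ | 0 ≤ s ∧ volume {u : ℝ | 0 ≤ u ∧ s < |x u|} ≤ ENNReal.ofReal t}

/-- The weighted mean function `φ(x)(t) = (1/ψ(t)) ∫₀ᵗ x*(s) ds`. -/
def phiW (ψ x : ℝ → ℝ) (t : ℝ) : ℝ := (∫ s in (0:ℝ)..t, decRearr x s) / ψ t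

/-- Membership in the Marcinkiewicz space `M(ψ)`. -/
def MemM (ψ x : ℝ → ℝ) : Prop :=
  Measurable x ∧ ∃ M : ℝ, ∀ t > (0:ℝ), phiW ψ x t ≤ M

/-- Membership in the positive cone `M₊(ψ)`. -/
def MemMplus (ψ x : ℝ → ℝ) : Prop := MemM ψ x ∧ ∀ t ∈ Ici (0:ℝ), 0 ≤ x t

/-- The Marcinkiewicz norm `‖x‖_{M(ψ)} = sup_{t>0} φ(x)(t)`. -/
def MNorm (ψ x : ℝ → ℝ) : ℝ := ⨆ t > (0:ℝ), phiW ψ x t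

/-- `κ ∈ 𝒦`: strictly increasing, invertible (as a map of `[0,∞)` onto itself),
differentiable, unbounded, with `κ(0) = 0`. -/
def MemK (κ : ℝ → ℝ) : Prop :=
  StrictMonoOn κ (Ici 0) ∧ κ 0 = 0 ∧ MapsTo κ (Ici 0) (Ici 0) ∧
    SurjOn κ (Ici 0) (Ici 0) ∧ DifferentiableOn ℝ κ (Ici 0) ∧ Tendsto κ atTop atTop

/-- `f_{L,κ}(x) = L(φ_κ(x))` for a Banach limit `L` on `C_b([0,∞))`; the function
`φ_κ(x)`, bounded and continuous on `(0,∞)`, is fed to `L` as `t ↦ φ_κ(x)(max t 1)`. -/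
def fL (L : BanachLimitR) (ψ κ x : ℝ → ℝ) : ℝ :=
  L.toFun fun t => phiW ψ x (κ (max t 1))

/-- `f_{L',κ}(x) = L'({φ(x)(κ(n))}ₙ)` for a Banach limit `L'` on `ℓ∞(ℕ)`. -/
def fLN (L' : BanachLimitN) (ψ κ x : ℝ → ℝ) : ℝ :=
  L'.toFun fun n => phiW ψ x (κ n)

/-- `κ` has restricted growth with respect to `ψ` (`κ ∈ R(ψ)`): the sequence
`ψ(κ(n))/ψ(κ(n+1))` is almost convergent to `1`. -/
def RestrictedGrowth (ψ κ : ℝ → ℝ) : Prop :=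
  ∀ L' : BanachLimitN, L'.toFun (fun n => ψ (κ n) / ψ (κ ((n:ℝ) + 1))) = 1

/-- `κ` has dominated growth with respect to `ψ` (`κ ∈ D(ψ)`):
`(ψ∘κ)'(t)/(ψ∘κ)(t) < C/t` for some `C > 0` and all `t > 0`. -/
def DominatedGrowth (ψ κ : ℝ → ℝ) : Prop :=
  (∀ t > (0:ℝ), DifferentiableAt ℝ (fun u => ψ (κ u)) t) ∧
    ∃ C > (0:ℝ), ∀ t > (0:ℝ), deriv (fun u => ψ (κ u)) t / ψ (κ t) < C / t

/-- `κ` is of exponential increase: `κ(t + C) > 2κ(t)` for some `C > 0` and all `t > 0`. -/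
def ExpIncrease (κ : ℝ → ℝ) : Prop := ∃ C > (0:ℝ), ∀ t > (0:ℝ), 2 * κ t < κ (t + C)

/-- The piecewise linear extension map `p : ℓ∞(ℕ) → C_b([0,∞))`. -/
def plExt (a : ℕ → ℝ) (t : ℝ) : ℝ :=
  a ⌊t⌋₊ + (a (⌊t⌋₊ + 1) - a ⌊t⌋₊) * (t - (⌊t⌋₊ : ℝ))

/-- The Cesàro mean `C(g)(μ) = (1/μ) ∫₀^μ g(s) ds` (with `C(g)(0) := g(0)`). -/
def cesaro (g : ℝ → ℝ) (μ : ℝ) : ℝ :=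
  if μ = 0 then g 0 else (∫ s in (0:ℝ)..μ, g s) / μ

/-- `M_k(g)(λ) = (1/k(λ)) ∫₀^λ g(s) k'(s) ds` (with `M_k(g)(0) := g(0)`). -/
def MkFun (k g : ℝ → ℝ) (l : ℝ) : ℝ :=
  if l = 0 then g 0 else (∫ s in (0:ℝ)..l, g s * deriv k s) / k l

/-- The Connes-Dixmier functional `τ_{γ,k}(x) = γ(M_k(φ(x)))`; the function
`M_k(φ(x))`, bounded and continuous on `(0,∞)`, is fed to `γ` as `t ↦ M_k(φ(x))(max t 1)`. -/
def tauCD (γ : SCbStar) (ψ k x : ℝ → ℝ) : ℝ :=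
  γ.toFun fun t => MkFun k (phiW ψ x) (max t 1)

/-- A set `Λ` of Banach limits has the Cesàro limit property if for each
`g ∈ C_b([0,∞))` both `liminf C(g)` and `limsup C(g)` are attained as values `L(g)`, `L ∈ Λ`. -/
def CesaroLimitProp (Λ : Set BanachLimitR) : Prop :=
  ∀ g : ℝ → ℝ, IsCb g →
    (∃ L ∈ Λ, L.toFun g = liminf (cesaro g) atTop) ∧
    (∃ L ∈ Λ, L.toFun g = limsup (cesaro g) atTop)

/-- Dilation invariance of an element of `SC_b^*([0,∞))`. -/
def DilationInvariant (ω : SCbStar) : Prop :=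
  ∀ g : ℝ → ℝ, IsCb g → ∀ a : ℝ, 0 < a → ω.toFun (fun t => g (a * t)) = ω.toFun g

private lemma omegaInf_mono {ψ : ℝ → ℝ} (hψ : OmegaInf ψ) : MonotoneOn ψ (Ici 0) := by
  obtain ⟨hconc, hnn, -, hinf⟩ := hψ
  intro a ha b hb hab
  rcases eq_or_lt_of_le hab with rfl | hab
  · exact le_rfl
  by_contra hlt
  push_neg at hlt
  obtain ⟨t, htb, hta⟩ : ∃ t, b ≤ t ∧ ψ a ≤ ψ t := by
    obtain ⟨t, h1, h2⟩ := ((hinf.eventually_ge_atTop (ψ a)).and (eventually_ge_atTop b)).exists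
    exact ⟨t, h2, h1⟩
  rcases eq_or_lt_of_le htb with rfl | htb
  · exact absurd hta (not_le.mpr hlt)
  have ht0 : (0:ℝ) ≤ t := le_trans hb htb.le
  have htapos : 0 < t - a := by linarith
  have hθ : 0 ≤ (t - b) / (t - a) := div_nonneg (by linarith) htapos.le
  have hη : 0 ≤ (b - a) / (t - a) := div_nonneg (by linarith) htapos.le
  have hsum : (t - b) / (t - a) + (b - a) / (t - a) = 1 := by field_simp; ring
  have hcomb := hconc.2 ha (mem_Ici.mpr ht0) hθ hη hsum
  have hpt : ((t - b) / (t - a)) • a + ((b - a) / (t - a)) • t = b := by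
    simp only [smul_eq_mul]; field_simp; ring
  rw [hpt] at hcomb
  simp only [smul_eq_mul] at hcomb
  have key : (b - a) / (t - a) * ψ a ≤ (b - a) / (t - a) * ψ t :=
    mul_le_mul_of_nonneg_left hta hη
  have hmul : (t - b) / (t - a) * ψ a + (b - a) / (t - a) * ψ a = ψ a := by
    rw [← add_mul, hsum, one_mul]
  linarith [hcomb, key, hmul]

private lemma tendsto_div_symm' {α : Type*} {l : Filter α} {f g : α → ℝ}
    (h : Tendsto (fun x => f x / g x) l (nhds 1)) :
    Tendsto (fun x => g x / f x) l (nhds 1) := by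
  have := h.inv₀ one_ne_zero
  simpa [inv_div] using this

/-- `ψ(2t)/ψ(t) → 1` iff there is `κ ∈ 𝒦` of exponential
increase with `ψ(κ(n))/ψ(κ(n+1)) → 1`. -/
theorem psi_doubling_iff_exists_exp_kappa (ψ : ℝ → ℝ) (hψ : OmegaInf ψ) :
    Tendsto (fun t : ℝ => ψ (2 * t) / ψ t) atTop (nhds 1) ↔
      ∃ κ : ℝ → ℝ, MemK κ ∧ ExpIncrease κ ∧
        Tendsto (fun n : ℕ => ψ (κ (n:ℝ)) / ψ (κ ((n:ℝ) + 1))) atTop (nhds 1) := by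
  classical
  obtain ⟨hconc, hnn, h0ψ, hinf⟩ := id hψ
  have mono := omegaInf_mono hψ
  constructor
  · intro h2
    set κf : ℝ → ℝ := fun t => t * Real.exp t with hκfdef
    have hκsm : StrictMonoOn κf (Ici 0) := by
      intro a ha b hb hab
      have h1 : a * Real.exp a ≤ a * Real.exp b :=
        mul_le_mul_of_nonneg_left (Real.exp_le_exp.mpr hab.le) (mem_Ici.mp ha)
      have h2' : a * Real.exp b < b * Real.exp b :=
        mul_lt_mul_of_pos_right hab (Real.exp_pos b)
      simpa [κf] using lt_of_le_of_lt h1 h2'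
    have hκinf : Tendsto κf atTop atTop :=
      tendsto_id.atTop_mul_atTop₀ Real.tendsto_exp_atTop
    have hκnn : ∀ x : ℝ, 0 ≤ x → 0 ≤ κf x := fun x hx =>
      mul_nonneg hx (Real.exp_pos x).le
    have hmemK : MemK κf := by
      refine ⟨hκsm, by simp [κf], fun x hx => mem_Ici.mpr (hκnn x (mem_Ici.mp hx)), ?_, ?_, hκinf⟩
      · intro y hy
        obtain ⟨b, hb0, hby⟩ : ∃ b : ℝ, 0 ≤ b ∧ y ≤ κf b := by
          obtain ⟨b, h1, h2'⟩ :=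
            ((hκinf.eventually_ge_atTop y).and (eventually_ge_atTop (0:ℝ))).exists
          exact ⟨b, h2', h1⟩
        have hc : ContinuousOn κf (Icc 0 b) :=
          (continuous_id.mul Real.continuous_exp).continuousOn
        have hy' : y ∈ Icc (κf 0) (κf b) := by
          constructor
          · simpa [κf] using mem_Ici.mp hy
          · exact hby
        obtain ⟨x, hx, hxy⟩ := intermediate_value_Icc hb0 hc hy'
        exact ⟨x, mem_Ici.mpr hx.1, hxy⟩
      · exact (differentiable_id.mul Real.differentiable_exp).differentiableOn
    have hexpInc : ExpIncrease κf := by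
      refine ⟨1, one_pos, fun t ht => ?_⟩
      have he1 : (2:ℝ) ≤ Real.exp 1 := by nlinarith [Real.add_one_le_exp 1]
      show 2 * (t * Real.exp t) < (t + 1) * Real.exp (t + 1)
      rw [Real.exp_add]
      nlinarith [Real.exp_pos t,
        mul_nonneg (by linarith : (0:ℝ) ≤ Real.exp 1 - 2)
          (by positivity : (0:ℝ) ≤ (t + 1) * Real.exp t)]
    refine ⟨κf, hmemK, hexpInc, ?_⟩
    -- ratio limit
    have hψpos : ∀ᶠ t in (atTop : Filter ℝ), 0 < ψ t := hinf.eventually_gt_atTop 0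
    have hcomp : ∀ c : ℝ, 0 < c →
        Tendsto (fun t : ℝ => ψ (2 * (c * t)) / ψ (c * t)) atTop (nhds 1) := fun c hc =>
      h2.comp (tendsto_id.const_mul_atTop hc)
    have h4 : Tendsto (fun t : ℝ => ψ (4 * t) / ψ t) atTop (nhds 1) := by
      have h := (hcomp 2 two_pos).mul h2
      rw [one_mul] at h
      refine h.congr' ?_
      filter_upwards [(tendsto_id.const_mul_atTop (two_pos (α := ℝ))).eventually hψpos]
        with t hpt
      simp only [id_eq] at hpt
      have e : 2 * (2 * t) = 4 * t := by ring
      rw [e, div_mul_div_cancel₀ hpt.ne']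
    have h8 : Tendsto (fun t : ℝ => ψ (8 * t) / ψ t) atTop (nhds 1) := by
      have h := (hcomp 4 four_pos).mul h4
      rw [one_mul] at h
      refine h.congr' ?_
      filter_upwards [(tendsto_id.const_mul_atTop (four_pos (α := ℝ))).eventually hψpos]
        with t hpt
      simp only [id_eq] at hpt
      have e : 2 * (4 * t) = 8 * t := by ring
      rw [e, div_mul_div_cancel₀ hpt.ne']
    have hInv8 : Tendsto (fun t : ℝ => ψ t / ψ (8 * t)) atTop (nhds 1) := tendsto_div_symm' h8
    have hκnat : Tendsto (fun n : ℕ => κf (n:ℝ)) atTop atTop :=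
      hκinf.comp tendsto_natCast_atTop_atTop
    have hlowlim : Tendsto (fun n : ℕ => ψ (κf (n:ℝ)) / ψ (8 * κf (n:ℝ))) atTop (nhds 1) :=
      hInv8.comp hκnat
    have tplus : Tendsto (fun n : ℕ => (n:ℝ) + 1) atTop atTop :=
      tendsto_atTop_add_const_right atTop 1 tendsto_natCast_atTop_atTop
    have hposn1 : ∀ᶠ n : ℕ in atTop, 0 < ψ (κf ((n:ℝ) + 1)) :=
      (hinf.comp (hκinf.comp tplus)).eventually_gt_atTop 0
    have hkey : ∀ n : ℕ, 1 ≤ n → κf ((n:ℝ) + 1) ≤ 8 * κf (n:ℝ) := by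
      intro n hn
      have hx : (1:ℝ) ≤ (n:ℝ) := by exact_mod_cast hn
      show ((n:ℝ) + 1) * Real.exp ((n:ℝ) + 1) ≤ 8 * ((n:ℝ) * Real.exp (n:ℝ))
      rw [Real.exp_add]
      nlinarith [Real.exp_pos (n:ℝ), Real.exp_one_lt_d9, Real.exp_pos 1,
        mul_nonneg (by nlinarith [Real.exp_one_lt_d9, Real.exp_pos 1] :
            (0:ℝ) ≤ 8 * (n:ℝ) - ((n:ℝ) + 1) * Real.exp 1)
          (Real.exp_pos (n:ℝ)).le]
    have hub : ∀ᶠ n : ℕ in atTop, ψ (κf (n:ℝ)) / ψ (κf ((n:ℝ) + 1)) ≤ 1 := by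
      filter_upwards [hposn1] with n hn
      refine (div_le_one hn).mpr (mono (mem_Ici.mpr (hκnn _ (Nat.cast_nonneg n)))
        (mem_Ici.mpr (hκnn _ (by positivity))) ?_)
      exact (hκsm.monotoneOn (mem_Ici.mpr (Nat.cast_nonneg n))
        (mem_Ici.mpr (by positivity)) (by linarith))
    have hlb : ∀ᶠ n : ℕ in atTop,
        ψ (κf (n:ℝ)) / ψ (8 * κf (n:ℝ)) ≤ ψ (κf (n:ℝ)) / ψ (κf ((n:ℝ) + 1)) := by
      filter_upwards [hposn1, eventually_ge_atTop 1] with n hn hn1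
      refine div_le_div_of_nonneg_left (hnn _ (mem_Ici.mpr (hκnn _ (Nat.cast_nonneg n)))) hn ?_
      exact mono (mem_Ici.mpr (hκnn _ (by positivity)))
        (mem_Ici.mpr (by positivity)) (hkey n hn1)
    exact tendsto_of_tendsto_of_tendsto_of_le_of_le' hlowlim tendsto_const_nhds hlb hub
  · rintro ⟨κ, hκ, ⟨C, hC, hCexp⟩, hlim⟩
    obtain ⟨hκsm, hκ0, hκmap, hκsurj, hκdiff, hκinf⟩ := hκ
    have monoκ : MonotoneOn κ (Ici 0) := hκsm.monotoneOn
    have hκnn : ∀ x : ℝ, 0 ≤ x → 0 ≤ κ x := fun x hx => hκmap (mem_Ici.mpr hx)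
    have hκnat : Tendsto (fun n : ℕ => κ (n:ℝ)) atTop atTop :=
      hκinf.comp tendsto_natCast_atTop_atTop
    have hψκnat : ∀ᶠ n : ℕ in atTop, 0 < ψ (κ (n:ℝ)) :=
      (hinf.comp hκnat).eventually_gt_atTop 0
    have qlim : ∀ j : ℕ,
        Tendsto (fun n : ℕ => ψ (κ (n:ℝ)) / ψ (κ ((n + j : ℕ):ℝ))) atTop (nhds 1) := by
      intro j
      induction j with
      | zero =>
        refine tendsto_const_nhds.congr' ?_
        filter_upwards [hψκnat] with n hn
        simp [div_self hn.ne']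
      | succ j ih =>
        have hshift : Tendsto
            (fun n : ℕ => ψ (κ ((n + j : ℕ):ℝ)) / ψ (κ ((n + (j + 1) : ℕ):ℝ)))
            atTop (nhds 1) := by
          have h := hlim.comp (tendsto_add_atTop_nat j)
          refine h.congr fun n => ?_
          show ψ (κ ((n + j : ℕ):ℝ)) / ψ (κ (((n + j : ℕ):ℝ) + 1)) = _
          push_cast
          rw [add_assoc]
        have h := ih.mul hshift
        rw [one_mul] at h
        refine h.congr' ?_
        filter_upwards [(hinf.comp (hκnat.comp (tendsto_add_atTop_nat j))).eventually_gt_atTop 0]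
          with n hn
        exact div_mul_div_cancel₀ hn.ne'
    set K : ℕ := ⌈C⌉₊ + 1 with hKdef
    have L : Tendsto (fun t : ℝ => ψ t / ψ (2 * t)) atTop (nhds 1) := by
      rw [Metric.tendsto_atTop]
      intro ε hε
      have hev : ∀ᶠ n : ℕ in atTop,
          (1 - ε / 2 < ψ (κ (n:ℝ)) / ψ (κ ((n + K : ℕ):ℝ))) ∧ 0 < ψ (κ (n:ℝ)) :=
        ((qlim K).eventually (eventually_gt_nhds (by linarith))).and hψκnat
      obtain ⟨N, hN⟩ := eventually_atTop.mp hev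
      refine ⟨max (κ (N:ℝ)) 1, fun t ht => ?_⟩
      have ht1 : (1:ℝ) ≤ t := le_trans (le_max_right _ _) ht
      have ht0 : (0:ℝ) ≤ t := by linarith
      obtain ⟨B₀, hB₀⟩ := eventually_atTop.mp (hκnat.eventually_gt_atTop t)
      set B := max B₀ N with hBdef
      set n := Nat.findGreatest (fun m => κ (m:ℝ) ≤ t) B with hndef
      have hPN : κ (N:ℝ) ≤ t := le_trans (le_max_left _ _) ht
      have hNn : N ≤ n := Nat.le_findGreatest (le_max_right _ _) hPN
      have hPn : κ (n:ℝ) ≤ t :=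
        Nat.findGreatest_spec (P := fun m => κ (m:ℝ) ≤ t) (le_max_right _ _) hPN
      have hnB : n < B := by
        rcases lt_or_eq_of_le (Nat.findGreatest_le (P := fun m => κ (m:ℝ) ≤ t) B) with h | h
        · exact h
        · exact absurd (h ▸ hPn) (not_le.mpr (hB₀ B (le_max_left _ _)))
      have hn1 : t < κ ((n + 1 : ℕ):ℝ) := by
        have h := Nat.findGreatest_is_greatest (P := fun m => κ (m:ℝ) ≤ t)
          (Nat.lt_succ_self n) hnB
        exact not_le.mp h
      have hstep : 2 * t < κ ((n + K : ℕ):ℝ) := by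
        have e1 : 2 * κ ((n + 1 : ℕ):ℝ) < κ (((n + 1 : ℕ):ℝ) + C) :=
          hCexp _ (by positivity)
        have e2 : κ (((n + 1 : ℕ):ℝ) + C) ≤ κ ((n + K : ℕ):ℝ) := by
          refine monoκ (mem_Ici.mpr (by positivity)) (mem_Ici.mpr (Nat.cast_nonneg _)) ?_
          have hceil := Nat.le_ceil C
          push_cast
          have hK : (K:ℝ) = (⌈C⌉₊:ℝ) + 1 := by simp [hKdef]
          linarith
        linarith
      have hq := hN n hNn
      have hκn0 : (0:ℝ) ≤ κ (n:ℝ) := hκnn _ (Nat.cast_nonneg n)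
      have hψκn : 0 < ψ (κ (n:ℝ)) := hq.2
      have hψt : 0 < ψ t :=
        lt_of_lt_of_le hψκn (mono (mem_Ici.mpr hκn0) (mem_Ici.mpr ht0) hPn)
      have hψ2t : 0 < ψ (2 * t) :=
        lt_of_lt_of_le hψt (mono (mem_Ici.mpr ht0) (mem_Ici.mpr (by linarith)) (by linarith))
      have h2tle : ψ (2 * t) ≤ ψ (κ ((n + K : ℕ):ℝ)) :=
        mono (mem_Ici.mpr (by linarith)) (mem_Ici.mpr (hκnn _ (Nat.cast_nonneg _))) hstep.le
      have hlow : ψ (κ (n:ℝ)) / ψ (κ ((n + K : ℕ):ℝ)) ≤ ψ t / ψ (2 * t) :=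
        div_le_div₀ hψt.le (mono (mem_Ici.mpr hκn0) (mem_Ici.mpr ht0) hPn) hψ2t h2tle
      have hup : ψ t / ψ (2 * t) ≤ 1 :=
        (div_le_one hψ2t).mpr
          (mono (mem_Ici.mpr ht0) (mem_Ici.mpr (by linarith)) (by linarith))
      rw [Real.dist_eq, abs_lt]
      constructor
      · linarith [hq.1]
      · linarith
    exact tendsto_div_symm' L
end
end

section
/- Let ψ ∈ Ω∞ and k ∈ 𝒦. Then: (i) for every γ ∈ SC_b*([0,∞)), the functional L := γ_k ∘ C is a Banach limit on C_b([0,∞)) (a Cesàro-Banach limit), and τ_{γ,k}(x) = f_{L,k^{−1}}(x) for all x ∈ M₊(ψ); (ii) conversely, for every Cesàro-Banach limit L = γ' ∘ C with γ' ∈ SC_b*([0,∞)), there exists γ ∈ SC_b*([0,∞)) such that f_{L,k^{−1}}(x) = τ_{γ,k}(x) for all x ∈ M₊(ψ). Consequently { τ_{γ,k} : γ ∈ SC_b*([0,∞)) } = { f_{L,k^{−1}} : L a Cesàro-Banach limit } as sets of functionals on M₊(ψ). -/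
open MeasureTheory Filter Set

noncomputable section

namespace CD

lemma isCb_sub {F G : ℝ → ℝ} (hF : IsCb F) (hG : IsCb G) : IsCb (fun t => F t - G t) := by
  obtain ⟨MF, hMF⟩ := hF.2; obtain ⟨MG, hMG⟩ := hG.2
  refine ⟨hF.1.sub hG.1, MF + MG, fun t ht => ?_⟩
  have h1 := abs_le.mp (hMF t ht); have h2 := abs_le.mp (hMG t ht)
  rw [abs_le]
  refine ⟨?_, ?_⟩
  · show -(MF + MG) ≤ F t - G t; linarith
  · show F t - G t ≤ MF + MG; linarith

-- primitive lemmas for a function bounded and continuous on (0,∞)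
section prim
variable {G : ℝ → ℝ} {M : ℝ}

lemma integrableOn_Ioc_of_bdd (hc : ContinuousOn G (Ioi 0))
    (hb : ∀ s > (0:ℝ), |G s| ≤ M) (T : ℝ) : IntegrableOn G (Ioc 0 T) := by
  have hmeas : AEStronglyMeasurable G (volume.restrict (Ioc 0 T)) :=
    (hc.mono Ioc_subset_Ioi_self).aestronglyMeasurable measurableSet_Ioc
  refine Integrable.mono' (g := fun _ => M) ?_ hmeas ?_
  · exact (integrableOn_const_iff).mpr (Or.inr measure_Ioc_lt_top)
  · exact (ae_restrict_iff' measurableSet_Ioc).mpr (.of_forall fun s hs => by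
      simpa [Real.norm_eq_abs] using hb s hs.1)

lemma intervalIntegrable_of_bdd (hc : ContinuousOn G (Ioi 0))
    (hb : ∀ s > (0:ℝ), |G s| ≤ M) {a b : ℝ} (ha : 0 ≤ a) (hb' : 0 ≤ b) :
    IntervalIntegrable G volume a b := by
  rw [intervalIntegrable_iff]
  refine (integrableOn_Ioc_of_bdd hc hb (max a b)).mono_set ?_
  rw [Set.uIoc]
  exact Ioc_subset_Ioc (le_min ha hb') le_rfl

lemma prim_sub_prim (hc : ContinuousOn G (Ioi 0)) (hb : ∀ s > (0:ℝ), |G s| ≤ M)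
    {a b : ℝ} (ha : 0 ≤ a) (hb' : 0 ≤ b) :
    (∫ s in (0:ℝ)..b, G s) - ∫ s in (0:ℝ)..a, G s = ∫ s in a..b, G s :=
  intervalIntegral.integral_interval_sub_left
    (intervalIntegrable_of_bdd hc hb le_rfl hb') (intervalIntegrable_of_bdd hc hb le_rfl ha)

lemma prim_abs_le (hb : ∀ s > (0:ℝ), |G s| ≤ M) {a b : ℝ} (ha : 0 ≤ a) (hb' : 0 ≤ b) :
    |∫ s in a..b, G s| ≤ M * |b - a| := by
  have := intervalIntegral.norm_integral_le_of_norm_le_const (C := M) (f := G) (a := a) (b := b)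
    (fun s hs => by
      rw [Set.uIoc] at hs
      exact (by simpa [Real.norm_eq_abs] using hb s (lt_of_le_of_lt (le_min ha hb') hs.1)))
  simpa [Real.norm_eq_abs] using this

lemma prim_continuousOn (hc : ContinuousOn G (Ioi 0)) (hb : ∀ s > (0:ℝ), |G s| ≤ M) :
    ContinuousOn (fun b => ∫ s in (0:ℝ)..b, G s) (Ici 0) := by
  have hM : 0 ≤ M := le_trans (abs_nonneg _) (hb 1 one_pos)
  refine LipschitzOnWith.continuousOn (K := M.toNNReal) (LipschitzOnWith.of_dist_le_mul ?_)
  intro x hx y hy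
  rw [Real.dist_eq, Real.dist_eq, prim_sub_prim hc hb hy hx]
  calc |∫ s in y..x, G s| ≤ M * |x - y| := prim_abs_le hb hy hx
  _ = M.toNNReal * |x - y| := by rw [Real.coe_toNNReal M hM]

end prim

lemma SCbStar_eq_of_tendsto (γ : SCbStar) {F G : ℝ → ℝ} (hF : IsCb F) (hG : IsCb G)
    (h : Tendsto (fun t => F t - G t) atTop (nhds 0)) : γ.toFun F = γ.toFun G := by
  have hH := isCb_sub hF hG
  have h0 : γ.toFun (fun t => F t - G t) = 0 := γ.vanish _ hH h
  have hadd := γ.map_add (fun t => F t - G t) G hH hG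
  have he : (fun t => (F t - G t) + G t) = F := funext fun t => by ring
  rw [he] at hadd
  linarith

lemma SCbStar_eq_of_eqOn (γ : SCbStar) {F G : ℝ → ℝ} (hF : IsCb F) (hG : IsCb G)
    (h : ∀ t, 0 ≤ t → F t = G t) : γ.toFun F = γ.toFun G := by
  refine SCbStar_eq_of_tendsto γ hF hG ?_
  have he : (fun t => F t - G t) =ᶠ[atTop] fun _ => (0:ℝ) := by
    filter_upwards [eventually_ge_atTop (0:ℝ)] with t ht
    simp [h t ht]
  exact Tendsto.congr' he.symm tendsto_const_nhds

section cesaro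
variable {h h' : ℝ → ℝ} {M : ℝ}

lemma cesaro_of_ne (f : ℝ → ℝ) {μ : ℝ} (hμ : μ ≠ 0) :
    cesaro f μ = (∫ s in (0:ℝ)..μ, f s) / μ := if_neg hμ

lemma cesaro_smul (c : ℝ) (f : ℝ → ℝ) :
    cesaro (fun t => c * f t) = fun μ => c * cesaro f μ := by
  funext μ
  by_cases hμ : μ = 0
  · simp [cesaro, hμ]
  · rw [cesaro_of_ne _ hμ, cesaro_of_ne _ hμ, intervalIntegral.integral_const_mul, mul_div_assoc]

lemma cesaro_one : cesaro (fun _ => (1:ℝ)) = fun _ => (1:ℝ) := by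
  funext μ
  by_cases hμ : μ = 0
  · simp [cesaro, hμ]
  · rw [cesaro_of_ne _ hμ]
    simp [div_self hμ]

lemma cesaro_add (hc : Continuous h) (hc' : Continuous h') :
    cesaro (fun t => h t + h' t) = fun μ => cesaro h μ + cesaro h' μ := by
  funext μ
  by_cases hμ : μ = 0
  · simp [cesaro, hμ]
  · rw [cesaro_of_ne _ hμ, cesaro_of_ne _ hμ, cesaro_of_ne _ hμ,
      intervalIntegral.integral_add (hc.intervalIntegrable _ _) (hc'.intervalIntegrable _ _),
      add_div]

lemma abs_integral_le_glob (hb : ∀ t, |h t| ≤ M) (a b : ℝ) :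
    |∫ s in a..b, h s| ≤ M * |b - a| := by
  have := intervalIntegral.norm_integral_le_of_norm_le_const (C := M) (f := h) (a := a) (b := b)
    (fun s _ => by simpa [Real.norm_eq_abs] using hb s)
  simpa [Real.norm_eq_abs] using this

lemma cesaro_abs_le (hb : ∀ t, |h t| ≤ M) (μ : ℝ) : |cesaro h μ| ≤ M := by
  by_cases hμ : μ = 0
  · simpa [cesaro, hμ] using hb 0
  · rw [cesaro_of_ne _ hμ, abs_div]
    have h2 : |∫ s in (0:ℝ)..μ, h s| ≤ M * |μ| := by simpa using abs_integral_le_glob hb 0 μ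
    have hμ' : 0 < |μ| := abs_pos.mpr hμ
    calc |∫ s in (0:ℝ)..μ, h s| / |μ| ≤ M * |μ| / |μ| := by gcongr
    _ = M := by field_simp

lemma cesaro_nonneg (h0 : ∀ t, 0 ≤ t → 0 ≤ h t) {μ : ℝ} (hμ : 0 ≤ μ) : 0 ≤ cesaro h μ := by
  by_cases hz : μ = 0
  · simpa [cesaro, hz] using h0 0 le_rfl
  · rw [cesaro_of_ne _ hz]
    exact div_nonneg (intervalIntegral.integral_nonneg hμ fun u hu => h0 u hu.1) hμ

lemma cesaro_congr_nonneg {f h : ℝ → ℝ} (hfh : ∀ s, 0 ≤ s → f s = h s) {μ : ℝ} (hμ : 0 ≤ μ) :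
    cesaro f μ = cesaro h μ := by
  by_cases hz : μ = 0
  · simp [cesaro, hz, hfh 0 le_rfl]
  · rw [cesaro_of_ne _ hz, cesaro_of_ne _ hz]
    congr 1
    refine intervalIntegral.integral_congr (fun s hs => ?_)
    rw [Set.uIcc_of_le hμ] at hs
    exact hfh s hs.1

lemma cesaro_continuousOn (hc : Continuous h) : ContinuousOn (cesaro h) (Ici 0) := by
  intro μ hμ
  rcases eq_or_lt_of_le (mem_Ici.mp hμ) with hz | hpos
  · subst hz
    have hD : HasDerivAt (fun u => ∫ s in (0:ℝ)..u, h s) (h 0) 0 :=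
      intervalIntegral.integral_hasDerivAt_right (hc.intervalIntegrable _ _)
        ⟨univ, univ_mem, hc.aestronglyMeasurable.restrict⟩ hc.continuousAt
    have hslope := hasDerivAt_iff_tendsto_slope.mp hD
    have hIoi : Tendsto (cesaro h) (nhdsWithin 0 (Ioi 0)) (nhds (h 0)) := by
      refine Tendsto.congr' ?_ (hslope.mono_left (nhdsWithin_mono _ fun ν hν => ne_of_gt hν))
      filter_upwards [self_mem_nhdsWithin] with ν hν
      have hν0 : (ν:ℝ) ≠ 0 := ne_of_gt hν
      rw [slope_def_field, intervalIntegral.integral_same, cesaro_of_ne _ hν0]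
      ring
    have hc0 : cesaro h 0 = h 0 := if_pos rfl
    rw [ContinuousWithinAt, hc0, ← Set.Ioi_insert (a := (0:ℝ)), nhdsWithin_insert, tendsto_sup]
    refine ⟨?_, hIoi⟩
    have := tendsto_pure_nhds (cesaro h) 0
    rwa [hc0] at this
  · apply ContinuousAt.continuousWithinAt
    have hne : ∀ᶠ ν in nhds μ, ν ≠ 0 := eventually_ne_nhds (ne_of_gt hpos)
    have heq : (fun ν => (∫ s in (0:ℝ)..ν, h s) / ν) =ᶠ[nhds μ] cesaro h := by
      filter_upwards [hne] with ν hν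
      exact (cesaro_of_ne _ hν).symm
    refine ContinuousAt.congr ?_ heq
    exact ((intervalIntegral.continuous_primitive (fun a b => hc.intervalIntegrable a b)
      0).continuousAt).div continuousAt_id (ne_of_gt hpos)

lemma cesaro_shift_sub (hc : Continuous h) (hb : ∀ t, |h t| ≤ M) {s : ℝ}
    {μ : ℝ} (hμ : 0 < μ) :
    |cesaro (fun u => h (u + s)) μ - cesaro h μ| ≤ 2 * (M * |s|) / μ := by
  rw [cesaro_of_ne _ (ne_of_gt hμ), cesaro_of_ne _ (ne_of_gt hμ), div_sub_div_same, abs_div,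
    abs_of_pos hμ]
  gcongr
  have hcs : (∫ u in (0:ℝ)..μ, h (u + s)) = ∫ x in s..(μ + s), h x := by
    rw [intervalIntegral.integral_comp_add_right h s, zero_add]
  have hint : ∀ a b : ℝ, IntervalIntegrable h volume a b := fun a b => hc.intervalIntegrable a b
  have a1 : (∫ x in (0:ℝ)..(μ + s), h x) - ∫ x in (0:ℝ)..s, h x = ∫ x in s..(μ + s), h x :=
    intervalIntegral.integral_interval_sub_left (hint _ _) (hint _ _)
  have a2 : (∫ x in (0:ℝ)..(μ + s), h x) - ∫ x in (0:ℝ)..μ, h x = ∫ x in μ..(μ + s), h x :=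
    intervalIntegral.integral_interval_sub_left (hint _ _) (hint _ _)
  have e1 : (∫ u in (0:ℝ)..μ, h (u + s)) - (∫ x in (0:ℝ)..μ, h x)
      = (∫ x in μ..(μ + s), h x) - ∫ x in (0:ℝ)..s, h x := by
    rw [hcs]; linarith
  rw [e1]
  have b1 : |∫ x in μ..(μ + s), h x| ≤ M * |s| := by
    simpa using abs_integral_le_glob hb μ (μ + s)
  have b2 : |∫ x in (0:ℝ)..s, h x| ≤ M * |s| := by
    simpa using abs_integral_le_glob hb 0 s
  calc |(∫ x in μ..(μ + s), h x) - ∫ x in (0:ℝ)..s, h x|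
      ≤ |∫ x in μ..(μ + s), h x| + |∫ x in (0:ℝ)..s, h x| := abs_sub _ _
  _ ≤ 2 * (M * |s|) := by linarith

end cesaro


section kfacts
variable {k ψ : ℝ → ℝ}

lemma k_contOn (hk : MemK k) : ContinuousOn k (Ici 0) := hk.2.2.2.2.1.continuousOn

lemma k_nonneg (hk : MemK k) {t : ℝ} (ht : 0 ≤ t) : 0 ≤ k t := hk.2.2.1 (mem_Ici.mpr ht)

lemma k_pos (hk : MemK k) {t : ℝ} (ht : 0 < t) : 0 < k t := by
  calc (0:ℝ) = k 0 := hk.2.1.symm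
  _ < k t := hk.1 (mem_Ici.mpr le_rfl) (mem_Ici.mpr ht.le) ht

lemma invk_mem (hk : MemK k) {y : ℝ} (hy : 0 ≤ y) : Function.invFunOn k (Ici 0) y ∈ Ici 0 :=
  Function.invFunOn_mem (hk.2.2.2.1 (mem_Ici.mpr hy))

lemma invk_rightInv (hk : MemK k) {y : ℝ} (hy : 0 ≤ y) :
    k (Function.invFunOn k (Ici 0) y) = y :=
  Function.invFunOn_eq (hk.2.2.2.1 (mem_Ici.mpr hy))

lemma invk_leftInv (hk : MemK k) {t : ℝ} (ht : 0 ≤ t) :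
    Function.invFunOn k (Ici 0) (k t) = t :=
  hk.1.injOn (invk_mem hk (k_nonneg hk ht)) (mem_Ici.mpr ht)
    (invk_rightInv hk (k_nonneg hk ht))

lemma invk_pos (hk : MemK k) {y : ℝ} (hy : 0 < y) :
    0 < Function.invFunOn k (Ici 0) y := by
  rcases eq_or_lt_of_le (mem_Ici.mp (invk_mem hk hy.le)) with h | h
  · exfalso
    have := invk_rightInv hk hy.le
    rw [← h, hk.2.1] at this
    exact absurd this.symm (ne_of_gt hy)
  · exact h

lemma invk_mono (hk : MemK k) {y y' : ℝ} (hy : 0 ≤ y) (hyy : y ≤ y') :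
    Function.invFunOn k (Ici 0) y ≤ Function.invFunOn k (Ici 0) y' := by
  have hy' : 0 ≤ y' := le_trans hy hyy
  refine (hk.1.le_iff_le (invk_mem hk hy) (invk_mem hk hy')).mp ?_
  rw [invk_rightInv hk hy, invk_rightInv hk hy']
  exact hyy

lemma invk_tendsto (hk : MemK k) :
    Tendsto (fun y => Function.invFunOn k (Ici 0) (max y 1)) atTop atTop := by
  rw [tendsto_atTop]
  intro b
  filter_upwards [eventually_ge_atTop (max (k (max b 0)) 1)] with y hy
  have hy1 : (1:ℝ) ≤ y := le_trans (le_max_right _ _) hy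
  rw [max_eq_left hy1]
  have h0y : (0:ℝ) ≤ y := le_trans zero_le_one hy1
  have hky : k (max b 0) ≤ k (Function.invFunOn k (Ici 0) y) := by
    rw [invk_rightInv hk h0y]; exact le_trans (le_max_left _ _) hy
  have := (hk.1.le_iff_le (mem_Ici.mpr (le_max_right b 0)) (invk_mem hk h0y)).mp hky
  exact le_trans (le_max_left b 0) this

lemma invk_continuousAt (hk : MemK k) {y : ℝ} (hy : 0 < y) :
    ContinuousAt (Function.invFunOn k (Ici 0)) y := by
  have hmono : MonotoneOn (fun z => Function.invFunOn k (Ici 0) (max z 0)) univ :=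
    fun a _ b _ hab => invk_mono hk (le_max_right a 0) (max_le_max hab le_rfl)
  have hIci : Ici (0:ℝ) ⊆ (fun z => Function.invFunOn k (Ici 0) (max z 0)) '' univ := by
    intro z hz
    refine ⟨k z, mem_univ _, ?_⟩
    simp only
    rw [max_eq_left (k_nonneg hk hz), invk_leftInv hk hz]
  have hja : 0 < Function.invFunOn k (Ici 0) (max y 0) := by
    rw [max_eq_left hy.le]; exact invk_pos hk hy
  have hCA : ContinuousAt (fun z => Function.invFunOn k (Ici 0) (max z 0)) y :=
    continuousAt_of_monotoneOn_of_image_mem_nhds hmono univ_mem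
      (mem_of_superset (Ioi_mem_nhds hja) (le_trans Ioi_subset_Ici_self hIci))
  refine hCA.congr ?_
  filter_upwards [Ioi_mem_nhds hy] with z hz
  rw [max_eq_left (le_of_lt hz)]

lemma psi_contOn (hψ : OmegaInf ψ) : ContinuousOn ψ (Ioi 0) := by
  have hconc : ConcaveOn ℝ (Ioi 0) ψ := hψ.1.subset Ioi_subset_Ici_self (convex_Ioi 0)
  have h2 := ConvexOn.continuousOn isOpen_Ioi hconc.neg
  have := h2.neg
  simpa using this

lemma psi_pos (hψ : OmegaInf ψ) {t : ℝ} (ht : 0 < t) : 0 < ψ t := by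
  obtain ⟨t₁, h1, h2⟩ := ((hψ.2.2.2.eventually_ge_atTop 1).and (eventually_ge_atTop (t + 1))).exists
  have ht₁p : 0 < t₁ := by linarith
  have htt : t < t₁ := by linarith
  set b := t / t₁ with hb
  have hb0 : 0 < b := div_pos ht ht₁p
  have hb1 : b < 1 := (div_lt_one ht₁p).mpr htt
  have key := hψ.1.2 (mem_Ici.mpr le_rfl) (mem_Ici.mpr ht₁p.le)
    (by linarith : (0:ℝ) ≤ 1 - b) hb0.le (by ring : (1 - b) + b = 1)
  have harg : (1 - b) • (0:ℝ) + b • t₁ = t := by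
    simp only [smul_eq_mul, mul_zero, zero_add]
    rw [hb]; field_simp
  rw [harg] at key
  simp only [smul_eq_mul] at key
  have hψ0 : 0 ≤ ψ 0 := hψ.2.1 0 (mem_Ici.mpr le_rfl)
  have e1 : 0 ≤ (1 - b) * ψ 0 := mul_nonneg (by linarith) hψ0
  have e2 : b ≤ b * ψ t₁ := by nlinarith
  linarith

lemma k_hasDeriv (hk : MemK k) {t : ℝ} (ht : 0 < t) : HasDerivAt k (deriv k t) t := by
  have h1 : DifferentiableAt ℝ k t :=
    (hk.2.2.2.2.1 t (mem_Ici.mpr ht.le)).differentiableAt (Ici_mem_nhds ht)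
  exact h1.hasDerivAt

lemma k_deriv_nonneg (hk : MemK k) {t : ℝ} (ht : 0 < t) : 0 ≤ deriv k t := by
  have hs := hasDerivAt_iff_tendsto_slope.mp (k_hasDeriv hk ht)
  have hs' := hs.mono_left (nhdsWithin_mono _ (fun y (hy : y ∈ Ioi t) => ne_of_gt hy))
  refine ge_of_tendsto hs' ?_
  filter_upwards [self_mem_nhdsWithin] with y hy
  rw [slope_def_field]
  have hty : t < y := hy
  apply div_nonneg _ (by linarith)
  have : k t ≤ k y := (hk.1.le_iff_le (mem_Ici.mpr ht.le)
    (mem_Ici.mpr (by linarith : (0:ℝ) ≤ y))).mpr hty.le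
  linarith

lemma subst_integral (hk : MemK k) (g : ℝ → ℝ) {lam : ℝ} (hlam : 0 ≤ lam) :
    ∫ s in (0:ℝ)..lam, g s * deriv k s
      = ∫ u in (0:ℝ)..(k lam), g (Function.invFunOn k (Ici 0) u) := by
  have himg : k '' Ioo 0 lam = Ioo 0 (k lam) := by
    apply Subset.antisymm
    · rintro _ ⟨s, hs, rfl⟩
      exact ⟨k_pos hk hs.1, hk.1 (mem_Ici.mpr hs.1.le) (mem_Ici.mpr hlam) hs.2⟩
    · intro y hy
      obtain ⟨s, hs, rfl⟩ := hk.2.2.2.1 (mem_Ici.mpr hy.1.le)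
      have hs0 : 0 ≤ s := hs
      have h1 : 0 < s := by
        rcases eq_or_lt_of_le hs0 with h | h
        · exfalso; rw [← h, hk.2.1] at hy; exact lt_irrefl 0 hy.1
        · exact h
      have h2 : s < lam := by
        by_contra hcon
        push_neg at hcon
        have := (hk.1.le_iff_le (mem_Ici.mpr hlam) (mem_Ici.mpr hs0)).mpr hcon
        exact absurd hy.2 (not_lt.mpr this)
      exact ⟨s, ⟨h1, h2⟩, rfl⟩
  have hCV := MeasureTheory.integral_image_eq_integral_abs_deriv_smul measurableSet_Ioo
    (fun s hs => (k_hasDeriv hk hs.1).hasDerivWithinAt)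
    (hk.1.injOn.mono (fun s (hs : s ∈ Ioo 0 lam) => mem_Ici.mpr hs.1.le))
    (fun u => g (Function.invFunOn k (Ici 0) u))
  rw [himg] at hCV
  have hklam : 0 ≤ k lam := k_nonneg hk hlam
  rw [intervalIntegral.integral_of_le hlam, intervalIntegral.integral_of_le hklam,
    MeasureTheory.integral_Ioc_eq_integral_Ioo, MeasureTheory.integral_Ioc_eq_integral_Ioo,
    hCV]
  refine MeasureTheory.setIntegral_congr_fun measurableSet_Ioo (fun s hs => ?_)
  have : Function.invFunOn k (Ici 0) (k s) = s := invk_leftInv hk hs.1.le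
  rw [this, abs_of_nonneg (k_deriv_nonneg hk hs.1), smul_eq_mul, mul_comm]

end kfacts

section rearr
variable {ψ x : ℝ → ℝ}

def Sset (x : ℝ → ℝ) (t : ℝ) : Set ℝ :=
  {s : ℝ | 0 ≤ s ∧ volume {u : ℝ | 0 ≤ u ∧ s < |x u|} ≤ ENNReal.ofReal t}

lemma decRearr_eq (x : ℝ → ℝ) (t : ℝ) : decRearr x t = sInf (Sset x t) := rfl

lemma decRearr_nonneg (x : ℝ → ℝ) (t : ℝ) : 0 ≤ decRearr x t :=
  Real.sInf_nonneg (fun s hs => hs.1)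

lemma Sset_mono (x : ℝ → ℝ) {t t' : ℝ} (h : t ≤ t') : Sset x t ⊆ Sset x t' :=
  fun s hs => ⟨hs.1, le_trans hs.2 (ENNReal.ofReal_le_ofReal h)⟩

lemma decRearr_anti (x : ℝ → ℝ) {t t' : ℝ} (h : t ≤ t') (hne : (Sset x t).Nonempty) :
    decRearr x t' ≤ decRearr x t :=
  csInf_le_csInf ⟨0, fun s hs => hs.1⟩ hne (Sset_mono x h)

lemma decRearr_of_empty {t : ℝ} (h : ¬ (Sset x t).Nonempty) : decRearr x t = 0 := by
  rw [decRearr_eq, not_nonempty_iff_eq_empty.mp h, Real.sInf_empty]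

lemma decRearr_measurable (x : ℝ → ℝ) : Measurable (decRearr x) := by
  apply measurable_of_Ioi
  intro a
  apply Set.OrdConnected.measurableSet
  constructor
  intro t ht u hu v hv
  simp only [mem_preimage, mem_Ioi] at ht hu ⊢
  rcases lt_or_ge a 0 with ha | ha
  · exact lt_of_lt_of_le ha (decRearr_nonneg x v)
  · by_cases hav : (Sset x v).Nonempty
    · exact lt_of_lt_of_le hu (decRearr_anti x hv.2 hav)
    · exfalso
      have : ¬ (Sset x t).Nonempty := fun hne => hav (hne.mono (Sset_mono x hv.1))
      rw [decRearr_of_empty this] at ht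
      exact absurd ht (not_lt.mpr ha)

lemma decRearr_integrableOn {m b : ℝ} (hm : (Sset x m).Nonempty) :
    IntegrableOn (decRearr x) (Icc m b) := by
  refine Integrable.mono' (g := fun _ => decRearr x m)
    ((integrableOn_const_iff).mpr (Or.inr measure_Icc_lt_top))
    ((decRearr_measurable x).aestronglyMeasurable.restrict) ?_
  refine (ae_restrict_iff' measurableSet_Icc).mpr (.of_forall fun s hs => ?_)
  rw [Real.norm_eq_abs, abs_of_nonneg (decRearr_nonneg x s)]
  exact decRearr_anti x hs.1 hm

lemma prim_decRearr_continuousOn (x : ℝ → ℝ) :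
    ContinuousOn (fun t => ∫ s in (0:ℝ)..t, decRearr x s) (Ici 0) := by
  by_cases hJ : ∀ t > (0:ℝ), IntervalIntegrable (decRearr x) volume 0 t
  · set r' : ℝ → ℝ := (Ici (0:ℝ)).indicator (decRearr x) with hr'
    have hIccInt : ∀ T : ℝ, IntegrableOn (decRearr x) (Icc 0 T) := by
      intro T
      have h1 : IntervalIntegrable (decRearr x) volume 0 (max T 1) :=
        hJ _ (lt_of_lt_of_le one_pos (le_max_right T 1))
      have h2 := (intervalIntegrable_iff_integrableOn_Icc_of_le
        (le_trans zero_le_one (le_max_right T 1))).mp h1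
      exact h2.mono_set (Icc_subset_Icc le_rfl (le_max_left T 1))
    have hint : ∀ a b : ℝ, IntervalIntegrable r' volume a b := by
      intro a b
      rw [intervalIntegrable_iff]
      have h0 : IntegrableOn (decRearr x) (Ici 0 ∩ Set.uIoc a b) volume := by
        refine (hIccInt (max a b)).mono_set ?_
        rintro s ⟨hs1, hs2⟩
        rw [Set.uIoc] at hs2
        exact ⟨hs1, hs2.2⟩
      have h1 : IntegrableOn (decRearr x) (Ici 0) (volume.restrict (Set.uIoc a b)) := by
        rw [MeasureTheory.IntegrableOn, Measure.restrict_restrict measurableSet_Ici]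
        exact h0
      exact h1.integrable_indicator measurableSet_Ici
    have hcont := intervalIntegral.continuous_primitive hint 0
    refine (hcont.continuousOn).congr (fun t ht => ?_)
    apply intervalIntegral.integral_congr
    intro s hs
    rw [Set.uIcc_of_le (mem_Ici.mp ht)] at hs
    exact (Set.indicator_of_mem (mem_Ici.mpr hs.1) _).symm
  · push_neg at hJ
    obtain ⟨t₂, ht₂, hni⟩ := hJ
    have hF : ∀ t ∈ Ici (0:ℝ), (∫ s in (0:ℝ)..t, decRearr x s) = (fun _ => (0:ℝ)) t := by
      intro t ht
      simp only
      rcases eq_or_lt_of_le (mem_Ici.mp ht) with rfl | htp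
      · exact intervalIntegral.integral_same
      by_cases hii : IntervalIntegrable (decRearr x) volume 0 t
      · have hTe : ∀ m, 0 ≤ m → m < t → ¬ (Sset x m).Nonempty := by
          intro m hm0 hmt hne
          have htt₂ : t ≤ t₂ := by
            by_contra hc
            push_neg at hc
            refine hni (hii.mono_set ?_)
            rw [Set.uIcc_of_le ht₂.le, Set.uIcc_of_le htp.le]
            exact Icc_subset_Icc le_rfl hc.le
          have hi2 : IntegrableOn (decRearr x) (Set.uIcc t t₂) := by
            rw [Set.uIcc_of_le htt₂]
            exact (decRearr_integrableOn (b := t₂) hne).mono_set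
              (Icc_subset_Icc hmt.le le_rfl)
          exact hni (hii.trans hi2.intervalIntegrable)
        rw [intervalIntegral.integral_of_le htp.le, MeasureTheory.integral_Ioc_eq_integral_Ioo]
        apply MeasureTheory.integral_eq_zero_of_ae
        refine (ae_restrict_iff' measurableSet_Ioo).mpr (.of_forall fun s hs => ?_)
        exact decRearr_of_empty (hTe s hs.1.le hs.2)
      · exact intervalIntegral.integral_undef hii
    exact ContinuousOn.congr continuousOn_const hF

lemma phiW_continuousOn (hψ : OmegaInf ψ) (x : ℝ → ℝ) : ContinuousOn (phiW ψ x) (Ioi 0) :=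
  ((prim_decRearr_continuousOn x).mono Ioi_subset_Ici_self).div (psi_contOn hψ)
    (fun t ht => ne_of_gt (psi_pos hψ ht))

lemma phiW_nonneg (hψ : OmegaInf ψ) (x : ℝ → ℝ) {t : ℝ} (ht : 0 ≤ t) : 0 ≤ phiW ψ x t :=
  div_nonneg (intervalIntegral.integral_nonneg ht fun u _ => decRearr_nonneg x u)
    (hψ.2.1 t (mem_Ici.mpr ht))

lemma phiW_bound (hψ : OmegaInf ψ) {x : ℝ → ℝ} (hx : MemMplus ψ x) :
    ∃ M : ℝ, 0 ≤ M ∧ ∀ t > (0:ℝ), |phiW ψ x t| ≤ M := by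
  obtain ⟨M, hM⟩ := hx.1.2
  refine ⟨max M 0, le_max_right M 0, fun t ht => ?_⟩
  rw [abs_of_nonneg (phiW_nonneg hψ x ht.le)]
  exact le_trans (hM t ht) (le_max_left M 0)

end rearr

section ext0
variable {f : ℝ → ℝ} {M : ℝ}

def ext0 (f : ℝ → ℝ) : ℝ → ℝ := fun t => f (max t 0)

lemma ext0_continuous (hf : IsCb f) : Continuous (ext0 f) :=
  hf.1.comp_continuous (continuous_id.max continuous_const)
    (fun t => mem_Ici.mpr (le_max_right t 0))

lemma ext0_bdd (hM : ∀ t ∈ Ici (0:ℝ), |f t| ≤ M) : ∀ t, |ext0 f t| ≤ M :=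
  fun t => hM _ (mem_Ici.mpr (le_max_right t 0))

lemma ext0_eq {t : ℝ} (ht : 0 ≤ t) : ext0 f t = f t := by
  rw [ext0, max_eq_left ht]

end ext0

section comp
variable {k f h : ℝ → ℝ} {M : ℝ}

lemma cesaro_comp_k_isCb (hk : MemK k) (hc : Continuous h) (hb : ∀ t, |h t| ≤ M) :
    IsCb (fun t => cesaro h (k t)) := by
  constructor
  · exact (cesaro_continuousOn hc).comp (k_contOn hk) (fun t ht => hk.2.2.1 ht)
  · exact ⟨M, fun t _ => cesaro_abs_le hb _⟩

lemma isCb_cesaro_comp (hk : MemK k) (hf : IsCb f) : IsCb (fun t => cesaro f (k t)) := by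
  obtain ⟨M, hM⟩ := hf.2
  have hcb := cesaro_comp_k_isCb hk (ext0_continuous hf) (ext0_bdd hM)
  have heq : ∀ t, 0 ≤ t → cesaro f (k t) = cesaro (ext0 f) (k t) := fun t ht =>
    cesaro_congr_nonneg (fun s hs => (ext0_eq hs).symm) (k_nonneg hk ht)
  constructor
  · exact hcb.1.congr (fun t ht => heq t ht)
  · refine ⟨M, fun t ht => ?_⟩
    show |cesaro f (k t)| ≤ M
    rw [heq t ht]
    exact cesaro_abs_le (ext0_bdd hM) _

lemma gamma_cesaro_ext (γ : SCbStar) (hk : MemK k) (hf : IsCb f) :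
    γ.toFun (fun t => cesaro f (k t)) = γ.toFun (fun t => cesaro (ext0 f) (k t)) := by
  obtain ⟨M, hM⟩ := hf.2
  refine SCbStar_eq_of_eqOn γ (isCb_cesaro_comp hk hf)
    (cesaro_comp_k_isCb hk (ext0_continuous hf) (ext0_bdd hM)) (fun t ht => ?_)
  exact cesaro_congr_nonneg (fun s hs => (ext0_eq hs).symm) (k_nonneg hk ht)

end comp

section bridge
variable {k g : ℝ → ℝ} {M : ℝ}

lemma G_contOn (hk : MemK k) (hgc : ContinuousOn g (Ioi 0)) :
    ContinuousOn (fun u => g (Function.invFunOn k (Ici 0) u)) (Ioi 0) := by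
  intro u hu
  have h1 : ContinuousAt g (Function.invFunOn k (Ici 0) u) :=
    hgc.continuousAt (isOpen_Ioi.mem_nhds (invk_pos hk hu))
  exact h1.comp_continuousWithinAt ((invk_continuousAt hk hu).continuousWithinAt)

lemma G_bdd (hk : MemK k) (hgb : ∀ t > (0:ℝ), |g t| ≤ M) :
    ∀ u > (0:ℝ), |g (Function.invFunOn k (Ici 0) u)| ≤ M :=
  fun u hu => hgb _ (invk_pos hk hu)

lemma Ft_cont (hk : MemK k) (hgc : ContinuousOn g (Ioi 0)) :
    Continuous (fun t => g (Function.invFunOn k (Ici 0) (max t 1))) := by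
  rw [continuous_iff_continuousAt]
  intro t
  have h0 : (0:ℝ) < max t 1 := lt_of_lt_of_le one_pos (le_max_right t 1)
  have h1 : ContinuousAt g (Function.invFunOn k (Ici 0) (max t 1)) :=
    hgc.continuousAt (isOpen_Ioi.mem_nhds (invk_pos hk h0))
  have h2 : ContinuousAt (fun s : ℝ => max s 1) t :=
    (continuous_id.max continuous_const).continuousAt
  have h3 : ContinuousAt (fun s : ℝ => Function.invFunOn k (Ici 0) (max s 1)) t :=
    ContinuousAt.comp (g := Function.invFunOn k (Ici 0)) (invk_continuousAt hk h0) h2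
  exact ContinuousAt.comp (g := g) (f := fun s : ℝ => Function.invFunOn k (Ici 0) (max s 1))
    h1 h3

lemma Ft_bdd (hk : MemK k) (hgb : ∀ t > (0:ℝ), |g t| ≤ M) :
    ∀ t, |g (Function.invFunOn k (Ici 0) (max t 1))| ≤ M :=
  fun t => hgb _ (invk_pos hk (lt_of_lt_of_le one_pos (le_max_right t 1)))

lemma MkFun_eq (hk : MemK k) {lam : ℝ} (hlam : 0 < lam) :
    MkFun k g lam
      = (∫ u in (0:ℝ)..(k lam), g (Function.invFunOn k (Ici 0) u)) / k lam := by
  rw [MkFun, if_neg (ne_of_gt hlam), subst_integral hk g hlam.le]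

lemma A_isCb (hk : MemK k) (hgc : ContinuousOn g (Ioi 0)) (hM0 : 0 ≤ M)
    (hgb : ∀ t > (0:ℝ), |g t| ≤ M) : IsCb (fun t => MkFun k g (max t 1)) := by
  have hmax : ∀ t : ℝ, (0:ℝ) < max t 1 := fun t => lt_of_lt_of_le one_pos (le_max_right t 1)
  have heq : (fun t => MkFun k g (max t 1)) = fun t =>
      (∫ u in (0:ℝ)..(k (max t 1)), g (Function.invFunOn k (Ici 0) u)) / k (max t 1) :=
    funext fun t => MkFun_eq hk (hmax t)
  have hG := G_contOn hk hgc
  have hGb := G_bdd hk hgb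
  have hkm : Continuous (fun t : ℝ => k (max t 1)) :=
    (k_contOn hk).comp_continuous (continuous_id.max continuous_const)
      (fun t => mem_Ici.mpr (le_trans zero_le_one (le_max_right t 1)))
  have hkmp : ∀ t : ℝ, 0 < k (max t 1) := fun t => k_pos hk (hmax t)
  constructor
  · rw [heq]
    refine Continuous.continuousOn ?_
    refine Continuous.div ?_ hkm (fun t => ne_of_gt (hkmp t))
    exact (prim_continuousOn hG hGb).comp_continuous hkm
      (fun t => mem_Ici.mpr (hkmp t).le)
  · refine ⟨M, fun t _ => ?_⟩
    show |MkFun k g (max t 1)| ≤ M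
    rw [MkFun_eq hk (hmax t), abs_div, abs_of_pos (hkmp t)]
    have h1 : |∫ u in (0:ℝ)..(k (max t 1)), g (Function.invFunOn k (Ici 0) u)|
        ≤ M * k (max t 1) := by
      have := prim_abs_le (M := M) hGb (le_refl (0:ℝ)) (hkmp t).le
      rwa [sub_zero, abs_of_pos (hkmp t)] at this
    calc |∫ u in (0:ℝ)..(k (max t 1)), g (Function.invFunOn k (Ici 0) u)| / k (max t 1)
        ≤ M * k (max t 1) / k (max t 1) := (div_le_div_iff_of_pos_right (hkmp t)).mpr h1
    _ = M := by field_simp [ne_of_gt (hkmp t)]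

lemma prim_diff_const (hk : MemK k) (hgc : ContinuousOn g (Ioi 0))
    (hgb : ∀ t > (0:ℝ), |g t| ≤ M) {μ : ℝ} (hμ : 1 ≤ μ) :
    (∫ u in (0:ℝ)..μ, g (Function.invFunOn k (Ici 0) u))
      - (∫ u in (0:ℝ)..μ, g (Function.invFunOn k (Ici 0) (max u 1)))
    = (∫ u in (0:ℝ)..1, g (Function.invFunOn k (Ici 0) u))
      - (∫ u in (0:ℝ)..1, g (Function.invFunOn k (Ici 0) (max u 1))) := by
  have hG := G_contOn hk hgc
  have hGb := G_bdd hk hgb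
  have hint1 : IntervalIntegrable (fun u => g (Function.invFunOn k (Ici 0) u)) volume 0 1 :=
    intervalIntegrable_of_bdd hG hGb le_rfl zero_le_one
  have hint2 : IntervalIntegrable (fun u => g (Function.invFunOn k (Ici 0) u)) volume 1 μ :=
    intervalIntegrable_of_bdd hG hGb zero_le_one (le_trans zero_le_one hμ)
  have hFc := Ft_cont hk hgc
  have hsplit1 := intervalIntegral.integral_add_adjacent_intervals hint1 hint2
  have hFint : ∀ a b : ℝ, IntervalIntegrable
      (fun u => g (Function.invFunOn k (Ici 0) (max u 1))) volume a b :=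
    fun a b => hFc.intervalIntegrable a b
  have hsplit2 := intervalIntegral.integral_add_adjacent_intervals (hFint 0 1) (hFint 1 μ)
  have hcongr : (∫ u in (1:ℝ)..μ, g (Function.invFunOn k (Ici 0) (max u 1)))
      = ∫ u in (1:ℝ)..μ, g (Function.invFunOn k (Ici 0) u) := by
    refine intervalIntegral.integral_congr (fun u hu => ?_)
    rw [Set.uIcc_of_le hμ] at hu
    rw [max_eq_left hu.1]
  rw [← hsplit1, ← hsplit2, hcongr]
  ring

end bridge

section assemble
variable {ψ k : ℝ → ℝ}

lemma isCb_add {F G : ℝ → ℝ} (hF : IsCb F) (hG : IsCb G) : IsCb (fun t => F t + G t) := by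
  obtain ⟨MF, hMF⟩ := hF.2; obtain ⟨MG, hMG⟩ := hG.2
  refine ⟨hF.1.add hG.1, MF + MG, fun t ht => ?_⟩
  have h1 := abs_le.mp (hMF t ht); have h2 := abs_le.mp (hMG t ht)
  rw [abs_le]
  refine ⟨?_, ?_⟩
  · show -(MF + MG) ≤ F t + G t; linarith
  · show F t + G t ≤ MF + MG; linarith

lemma isCb_shift {f : ℝ → ℝ} (hf : IsCb f) {s : ℝ} (hs : 0 ≤ s) :
    IsCb (fun t => f (t + s)) := by
  obtain ⟨M, hM⟩ := hf.2
  refine ⟨hf.1.comp (Continuous.continuousOn (continuous_id.add continuous_const))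
    (fun t ht => ?_), M, fun t ht => hM _ (mem_Ici.mpr (by
      have := mem_Ici.mp ht; linarith))⟩
  have := mem_Ici.mp ht
  exact mem_Ici.mpr (by linarith)

def mkL (γ : SCbStar) (k : ℝ → ℝ) (hk : MemK k) : BanachLimitR where
  toFun f := γ.toFun fun t => cesaro f (k t)
  map_add f g hf hg := by
    show γ.toFun (fun t => cesaro (fun u => f u + g u) (k t))
      = (γ.toFun fun t => cesaro f (k t)) + γ.toFun fun t => cesaro g (k t)
    obtain ⟨Mf, hMf⟩ := hf.2
    obtain ⟨Mg, hMg⟩ := hg.2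
    have hfg : IsCb (fun t => f t + g t) := isCb_add hf hg
    have e0 := gamma_cesaro_ext γ hk hfg
    have e2 : (fun t => cesaro (ext0 (fun u => f u + g u)) (k t))
        = fun t => cesaro (ext0 f) (k t) + cesaro (ext0 g) (k t) := by
      funext t
      have e1 : ext0 (fun u => f u + g u) = fun u => ext0 f u + ext0 g u := rfl
      rw [e1, cesaro_add (ext0_continuous hf) (ext0_continuous hg)]
    rw [e0, e2, γ.map_add _ _ (cesaro_comp_k_isCb hk (ext0_continuous hf) (ext0_bdd hMf))
      (cesaro_comp_k_isCb hk (ext0_continuous hg) (ext0_bdd hMg)),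
      ← gamma_cesaro_ext γ hk hf, ← gamma_cesaro_ext γ hk hg]
  map_smul c f hf := by
    show γ.toFun (fun t => cesaro (fun u => c * f u) (k t))
      = c * γ.toFun fun t => cesaro f (k t)
    have e : (fun t => cesaro (fun u => c * f u) (k t)) = fun t => c * cesaro f (k t) := by
      funext t; rw [cesaro_smul c f]
    rw [e, γ.map_smul c _ (isCb_cesaro_comp hk hf)]
  pos f hf h0 := by
    refine γ.pos _ (isCb_cesaro_comp hk hf) (fun t ht => ?_)
    exact cesaro_nonneg (fun u hu => h0 u (mem_Ici.mpr hu)) (k_nonneg hk (mem_Ici.mp ht))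
  map_one := by
    show γ.toFun (fun t => cesaro (fun _ => (1:ℝ)) (k t)) = 1
    have e : (fun t => cesaro (fun _ => (1:ℝ)) (k t)) = fun _ => (1:ℝ) := by
      funext t; rw [cesaro_one]
    rw [e, γ.map_one]
  shift_inv f hf s hs := by
    show γ.toFun (fun t => cesaro (fun u => f (u + s)) (k t))
      = γ.toFun fun t => cesaro f (k t)
    obtain ⟨Mf, hMf⟩ := hf.2
    have hhc : Continuous (ext0 f) := ext0_continuous hf
    have hhb : ∀ t, |ext0 f t| ≤ Mf := ext0_bdd hMf
    have hfs : IsCb (fun t => f (t + s)) := isCb_shift hf hs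
    have hshiftC : Continuous (fun u => ext0 f (u + s)) :=
      hhc.comp (continuous_id.add continuous_const)
    have hshiftB : ∀ t, |ext0 f (t + s)| ≤ Mf := fun t => hhb _
    have step1 : γ.toFun (fun t => cesaro (fun u => f (u + s)) (k t))
        = γ.toFun (fun t => cesaro (fun u => ext0 f (u + s)) (k t)) := by
      refine SCbStar_eq_of_eqOn γ (isCb_cesaro_comp hk hfs)
        (cesaro_comp_k_isCb hk hshiftC hshiftB) (fun t ht => ?_)
      refine cesaro_congr_nonneg (fun u hu => ?_) (k_nonneg hk ht)
      exact (ext0_eq (by linarith)).symm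
    have step3 : γ.toFun (fun t => cesaro f (k t))
        = γ.toFun (fun t => cesaro (ext0 f) (k t)) := gamma_cesaro_ext γ hk hf
    have step2 : γ.toFun (fun t => cesaro (fun u => ext0 f (u + s)) (k t))
        = γ.toFun (fun t => cesaro (ext0 f) (k t)) := by
      refine SCbStar_eq_of_tendsto γ (cesaro_comp_k_isCb hk hshiftC hshiftB)
        (cesaro_comp_k_isCb hk hhc hhb) ?_
      apply squeeze_zero_norm' (a := fun t => 2 * (Mf * |s|) / k t)
      · filter_upwards [hk.2.2.2.2.2.eventually_gt_atTop 0] with t hkt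
        rw [Real.norm_eq_abs]
        exact cesaro_shift_sub hhc hhb hkt
      · exact tendsto_const_nhds.div_atTop hk.2.2.2.2.2
    rw [step1, step2, ← step3]

lemma AB_tendsto {g : ℝ → ℝ} {M : ℝ} (hk : MemK k) (hgc : ContinuousOn g (Ioi 0))
    (hgb : ∀ t > (0:ℝ), |g t| ≤ M) :
    Tendsto (fun t => MkFun k g (max t 1)
      - cesaro (fun u => g (Function.invFunOn k (Ici 0) (max u 1))) (k t)) atTop (nhds 0) := by
  set C0 := (∫ u in (0:ℝ)..1, g (Function.invFunOn k (Ici 0) u))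
    - (∫ u in (0:ℝ)..1, g (Function.invFunOn k (Ici 0) (max u 1))) with hC0
  have hev : (fun t => MkFun k g (max t 1)
      - cesaro (fun u => g (Function.invFunOn k (Ici 0) (max u 1))) (k t))
      =ᶠ[atTop] fun t => C0 / k t := by
    filter_upwards [eventually_ge_atTop (1:ℝ), hk.2.2.2.2.2.eventually_ge_atTop 1] with t ht hkt
    have hktpos : (0:ℝ) < k t := lt_of_lt_of_le one_pos hkt
    rw [max_eq_left ht, MkFun_eq hk (lt_of_lt_of_le zero_lt_one ht),
      cesaro_of_ne _ (ne_of_gt hktpos), div_sub_div_same, hC0,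
      prim_diff_const hk hgc hgb hkt]
  exact Tendsto.congr' hev.symm (tendsto_const_nhds.div_atTop hk.2.2.2.2.2)

lemma tau_eq_fL (γ : SCbStar) (hψ : OmegaInf ψ) (hk : MemK k)
    {x : ℝ → ℝ} (hx : MemMplus ψ x) :
    γ.toFun (fun t => MkFun k (phiW ψ x) (max t 1))
      = γ.toFun (fun t =>
          cesaro (fun u => phiW ψ x (Function.invFunOn k (Ici 0) (max u 1))) (k t)) := by
  obtain ⟨M, hM0, hgb⟩ := phiW_bound hψ hx
  have hgc := phiW_continuousOn hψ x
  exact SCbStar_eq_of_tendsto γ (A_isCb hk hgc hM0 hgb)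
    (cesaro_comp_k_isCb hk (Ft_cont hk hgc) (Ft_bdd hk hgb)) (AB_tendsto hk hgc hgb)

lemma m_continuous (hk : MemK k) :
    Continuous (fun μ : ℝ => Function.invFunOn k (Ici 0) (max μ 1)) := by
  rw [continuous_iff_continuousAt]; intro μ
  have h0 : (0:ℝ) < max μ 1 := lt_of_lt_of_le one_pos (le_max_right μ 1)
  have h2 : ContinuousAt (fun s : ℝ => max s 1) μ :=
    (continuous_id.max continuous_const).continuousAt
  exact ContinuousAt.comp (g := Function.invFunOn k (Ici 0)) (invk_continuousAt hk h0) h2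

lemma isCb_comp_m (hk : MemK k) {h : ℝ → ℝ} (hh : IsCb h) :
    IsCb (fun μ => h (Function.invFunOn k (Ici 0) (max μ 1))) := by
  obtain ⟨M, hM⟩ := hh.2
  refine ⟨Continuous.continuousOn ?_, M,
    fun μ _ => hM _ (invk_mem hk (le_trans zero_le_one (le_max_right μ 1)))⟩
  exact hh.1.comp_continuous (m_continuous hk)
    (fun μ => invk_mem hk (le_trans zero_le_one (le_max_right μ 1)))

def mkGamma (γ' : SCbStar) (k : ℝ → ℝ) (hk : MemK k) : SCbStar where
  toFun h := γ'.toFun fun μ => h (Function.invFunOn k (Ici 0) (max μ 1))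
  map_add f g hf hg := γ'.map_add _ _ (isCb_comp_m hk hf) (isCb_comp_m hk hg)
  map_smul c f hf := γ'.map_smul c _ (isCb_comp_m hk hf)
  pos f hf h0 := γ'.pos _ (isCb_comp_m hk hf)
    (fun μ _ => h0 _ (invk_mem hk (le_trans zero_le_one (le_max_right μ 1))))
  map_one := γ'.map_one
  vanish f hf hten := γ'.vanish _ (isCb_comp_m hk hf) (hten.comp (invk_tendsto hk))

lemma fL_eq_tau (γ' : SCbStar) (hψ : OmegaInf ψ) (hk : MemK k)
    {x : ℝ → ℝ} (hx : MemMplus ψ x) :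
    γ'.toFun (cesaro (fun u => phiW ψ x (Function.invFunOn k (Ici 0) (max u 1))))
      = γ'.toFun (fun μ => MkFun k (phiW ψ x)
          (max (Function.invFunOn k (Ici 0) (max μ 1)) 1)) := by
  obtain ⟨M, hM0, hgb⟩ := phiW_bound hψ hx
  have hgc := phiW_continuousOn hψ x
  have hA := A_isCb hk hgc hM0 hgb
  refine SCbStar_eq_of_tendsto γ'
    ⟨(cesaro_continuousOn (Ft_cont hk hgc)), M, fun μ _ => cesaro_abs_le (Ft_bdd hk hgb) μ⟩
    (isCb_comp_m hk hA) ?_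
  set C0 := (∫ u in (0:ℝ)..1, phiW ψ x (Function.invFunOn k (Ici 0) u))
    - (∫ u in (0:ℝ)..1, phiW ψ x (Function.invFunOn k (Ici 0) (max u 1))) with hC0
  have hev : (fun μ => cesaro (fun u => phiW ψ x (Function.invFunOn k (Ici 0) (max u 1))) μ
      - MkFun k (phiW ψ x) (max (Function.invFunOn k (Ici 0) (max μ 1)) 1))
      =ᶠ[atTop] fun μ => -C0 / μ := by
    filter_upwards [eventually_ge_atTop (max (k 1) 1)] with μ hμ
    have hμ1 : (1:ℝ) ≤ μ := le_trans (le_max_right _ _) hμ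
    have hμk : k 1 ≤ μ := le_trans (le_max_left _ _) hμ
    have hμ0 : (0:ℝ) < μ := lt_of_lt_of_le one_pos hμ1
    have e1 : max μ 1 = μ := max_eq_left hμ1
    have hinv1 : (1:ℝ) ≤ Function.invFunOn k (Ici 0) μ := by
      have h := invk_mono hk (k_nonneg hk zero_le_one) hμk
      rwa [invk_leftInv hk zero_le_one] at h
    have hinvpos : (0:ℝ) < Function.invFunOn k (Ici 0) μ := lt_of_lt_of_le one_pos hinv1
    rw [e1, max_eq_left hinv1, MkFun_eq hk hinvpos, invk_rightInv hk hμ0.le,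
      cesaro_of_ne _ (ne_of_gt hμ0), div_sub_div_same, hC0]
    rw [show (∫ u in (0:ℝ)..μ, phiW ψ x (Function.invFunOn k (Ici 0) (max u 1)))
        - (∫ u in (0:ℝ)..μ, phiW ψ x (Function.invFunOn k (Ici 0) u))
        = -((∫ u in (0:ℝ)..μ, phiW ψ x (Function.invFunOn k (Ici 0) u))
        - (∫ u in (0:ℝ)..μ, phiW ψ x (Function.invFunOn k (Ici 0) (max u 1)))) by ring,
      prim_diff_const hk hgc hgb hμ1]
  exact Tendsto.congr' hev.symm (tendsto_const_nhds.div_atTop tendsto_id)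

end assemble

end CD


/-- the Connes-Dixmier functionals `τ_{γ,k}` on `M₊(ψ)` are
exactly the functionals `f_{L,k⁻¹}` with `L = γ_k ∘ C` a Cesàro-Banach limit. -/
theorem connesDixmier_eq_cesaroBanach (ψ k : ℝ → ℝ) (hψ : OmegaInf ψ) (hk : MemK k) :
    (∀ γ : SCbStar, ∃ L : BanachLimitR,
      (∀ f : ℝ → ℝ, L.toFun f = γ.toFun fun t => cesaro f (k t)) ∧
      ∀ x : ℝ → ℝ, MemMplus ψ x →
        tauCD γ ψ k x = fL L ψ (fun y => Function.invFunOn k (Ici 0) y) x) ∧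
    (∀ γ' : SCbStar, ∀ L : BanachLimitR,
      (∀ f : ℝ → ℝ, L.toFun f = γ'.toFun (cesaro f)) →
      ∃ γ : SCbStar, ∀ x : ℝ → ℝ, MemMplus ψ x →
        fL L ψ (fun y => Function.invFunOn k (Ici 0) y) x = tauCD γ ψ k x) := by
  constructor
  · intro γ
    refine ⟨CD.mkL γ k hk, fun f => rfl, fun x hx => ?_⟩
    exact CD.tau_eq_fL γ hψ hk hx
  · intro γ' L hL
    refine ⟨CD.mkGamma γ' k hk, fun x hx => ?_⟩
    exact (hL _).trans (CD.fL_eq_tau γ' hψ hk hx)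
end
end

section
/- Let ψ ∈ Ω∞ and let κ ∈ 𝒦 have dominated growth with respect to ψ (κ ∈ D(ψ)). Let Λ ⊆ BL(ℝ₊) be a set of Banach limits with the Cesàro limit property. Then there exists a constant c with 0 < c < 1 such that for every x ∈ M(ψ): c · ρ₁(x) ≤ sup{ f_{L,κ}(x) : L ∈ Λ } ≤ ρ₁(x), where ρ₁(x) := limsup_{t→∞} φ(x)(t). -/
open MeasureTheory Filter Set

noncomputable section

/-! ### Auxiliary lemmas -/

section Aux

/-- A function in `Ω∞` is positive on `(0,∞)`. -/
lemma aux_psi_pos {ψ : ℝ → ℝ} (hψ : OmegaInf ψ) {t : ℝ} (ht : 0 < t) : 0 < ψ t := by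
  obtain ⟨hconc, hnn, -, hinf⟩ := hψ
  obtain ⟨T, hT1, hTt⟩ := ((hinf.eventually_ge_atTop 1).and (eventually_ge_atTop (t + 1))).exists
  have hT0 : (0:ℝ) < T := by linarith
  have htT : t ≤ T := by linarith
  have hdiv : t / T ≤ 1 := (div_le_one hT0).2 htT
  have h := hconc.2 (mem_Ici.2 le_rfl) (mem_Ici.2 hT0.le)
    (show (0:ℝ) ≤ 1 - t / T by linarith)
    (show (0:ℝ) ≤ t / T from div_nonneg ht.le hT0.le)
    (by ring)
  have harg : (1 - t / T) • (0:ℝ) + (t / T) • T = t := by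
    simp only [smul_eq_mul]; field_simp; ring
  rw [harg] at h
  simp only [smul_eq_mul] at h
  have hψ0 : 0 ≤ ψ 0 := hnn 0 (mem_Ici.2 le_rfl)
  have h1 : 0 ≤ (1 - t / T) * ψ 0 := mul_nonneg (by linarith) hψ0
  have h2 : 0 < t / T * ψ T := by
    have := div_pos ht hT0
    nlinarith
  linarith

lemma aux_decRearr_nonneg (x : ℝ → ℝ) (t : ℝ) : 0 ≤ decRearr x t :=
  Real.sInf_nonneg fun _ hs => hs.1

/-- The decreasing rearrangement is antitone on `(0,∞)` for measurable `x`. -/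
lemma aux_decRearr_anti {x : ℝ → ℝ} (hx : Measurable x) :
    AntitoneOn (decRearr x) (Ioi 0) := by
  by_cases hfin : ∃ s : ℝ, 0 ≤ s ∧ volume {u : ℝ | 0 ≤ u ∧ s < |x u|} ≠ ⊤
  · obtain ⟨s₀, hs₀, hs₀fin⟩ := hfin
    have hne : ∀ t : ℝ, 0 < t →
        {s : ℝ | 0 ≤ s ∧ volume {u : ℝ | 0 ≤ u ∧ s < |x u|} ≤ ENNReal.ofReal t}.Nonempty := by
      intro t ht
      set A : ℕ → Set ℝ := fun n => {u : ℝ | 0 ≤ u ∧ s₀ + n < |x u|} with hA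
      have hmeas : ∀ n, MeasurableSet (A n) := by
        intro n
        have hAe : A n = Ici 0 ∩ {u | s₀ + n < |x u|} := by
          ext u; simp only [hA, mem_setOf_eq, mem_inter_iff, mem_Ici]
        rw [hAe]
        exact measurableSet_Ici.inter (measurableSet_lt measurable_const hx.abs)
      have hanti : Antitone A := by
        intro m n hmn
        refine fun u hu => ⟨hu.1, lt_of_le_of_lt ?_ hu.2⟩
        have : (m:ℝ) ≤ n := Nat.cast_le.2 hmn
        linarith
      have hint : (⋂ n, A n) = ∅ := by
        ext u
        simp only [mem_iInter, mem_empty_iff_false, iff_false, not_forall, hA, mem_setOf_eq,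
          not_and, not_lt]
        obtain ⟨n, hn⟩ := exists_nat_gt (|x u| - s₀)
        exact ⟨n, fun _ => by linarith⟩
      have htend := tendsto_measure_iInter_atTop (μ := volume)
        (fun n => (hmeas n).nullMeasurableSet) hanti
        ⟨0, by simpa [hA] using hs₀fin⟩
      rw [hint] at htend
      simp only [measure_empty] at htend
      have hpos : (0:ENNReal) < ENNReal.ofReal t := ENNReal.ofReal_pos.2 ht
      obtain ⟨n, hn⟩ := (htend.eventually_lt_const hpos).exists
      exact ⟨s₀ + n, ⟨by positivity, le_of_lt hn⟩⟩
    intro a ha b hb hab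
    refine csInf_le_csInf ⟨0, fun s hs => hs.1⟩ (hne a ha) ?_
    intro s hs
    exact ⟨hs.1, hs.2.trans (ENNReal.ofReal_le_ofReal hab)⟩
  · push_neg at hfin
    have hzero : ∀ t : ℝ, decRearr x t = 0 := by
      intro t
      unfold decRearr
      have : {s : ℝ | 0 ≤ s ∧ volume {u : ℝ | 0 ≤ u ∧ s < |x u|} ≤ ENNReal.ofReal t} = ∅ := by
        ext s
        simp only [mem_setOf_eq, mem_empty_iff_false, iff_false, not_and, not_le]
        intro hs
        rw [hfin s hs]
        exact ENNReal.ofReal_lt_top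
      rw [this, Real.sInf_empty]
    intro a _ b _ _
    simp [hzero]

end Aux

section Aux2

variable {ψ κ x : ℝ → ℝ}

lemma aux_y_intble (hx : Measurable x) {a b : ℝ} (ha : 0 < a) (hab : a ≤ b) :
    IntervalIntegrable (decRearr x) volume a b := by
  apply AntitoneOn.intervalIntegrable
  apply (aux_decRearr_anti hx).mono
  rw [uIcc_of_le hab]
  exact fun s hs => lt_of_lt_of_le ha hs.1

lemma aux_y_intble' (hx : Measurable x) {a b : ℝ} (ha : 0 < a) (hb : 0 < b) :
    IntervalIntegrable (decRearr x) volume a b := by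
  rcases le_total a b with h | h
  · exact aux_y_intble hx ha h
  · exact (aux_y_intble hx hb h).symm

lemma aux_F_cases (hx : Measurable x) :
    (∀ t > (0:ℝ), IntervalIntegrable (decRearr x) volume 0 t) ∨
      (∀ t > (0:ℝ), (∫ s in (0:ℝ)..t, decRearr x s) = 0) := by
  by_cases h1 : IntervalIntegrable (decRearr x) volume 0 1
  · left
    intro t ht
    rcases le_or_gt t 1 with h | h
    · exact h1.mono_set
        (by rw [uIcc_of_le ht.le, uIcc_of_le zero_le_one]; exact Icc_subset_Icc le_rfl h)
    · exact h1.trans (aux_y_intble hx one_pos h.le)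
  · right
    intro t ht
    apply intervalIntegral.integral_undef
    intro h
    apply h1
    rcases le_or_gt 1 t with hle | hlt
    · exact h.mono_set
        (by rw [uIcc_of_le ht.le, uIcc_of_le zero_le_one]; exact Icc_subset_Icc le_rfl hle)
    · exact h.trans (aux_y_intble hx ht hlt.le)

lemma aux_F_nonneg (x : ℝ → ℝ) {t : ℝ} (ht : 0 ≤ t) :
    0 ≤ ∫ s in (0:ℝ)..t, decRearr x s :=
  intervalIntegral.integral_nonneg ht fun u _ => aux_decRearr_nonneg x u

lemma aux_F_mono (hx : Measurable x) {a b : ℝ} (ha : 0 < a) (hab : a ≤ b) :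
    (∫ s in (0:ℝ)..a, decRearr x s) ≤ ∫ s in (0:ℝ)..b, decRearr x s := by
  rcases aux_F_cases hx with hint | hz
  · have hsum := intervalIntegral.integral_add_adjacent_intervals
      (hint a ha) (aux_y_intble hx ha hab)
    have hpos : 0 ≤ ∫ s in a..b, decRearr x s :=
      intervalIntegral.integral_nonneg hab fun u _ => aux_decRearr_nonneg x u
    linarith [hsum]
  · rw [hz a ha, hz b (lt_of_lt_of_le ha hab)]

lemma aux_F_cont (hx : Measurable x) {a : ℝ} (ha : 0 < a) :
    ContinuousOn (fun t => ∫ s in (0:ℝ)..t, decRearr x s) (Ici a) := by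
  rcases aux_F_cases hx with hint | hz
  · have hlip : LipschitzOnWith (Real.toNNReal (decRearr x a))
        (fun t => ∫ s in (0:ℝ)..t, decRearr x s) (Ici a) := by
      apply LipschitzOnWith.of_dist_le_mul
      intro u hu v hv
      simp only [mem_Ici] at hu hv
      have hua : 0 < u := lt_of_lt_of_le ha hu
      have hva : 0 < v := lt_of_lt_of_le ha hv
      have hvu : (∫ s in (0:ℝ)..u, decRearr x s) - (∫ s in (0:ℝ)..v, decRearr x s)
          = ∫ s in v..u, decRearr x s := by
        have hadd := intervalIntegral.integral_add_adjacent_intervals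
          (hint v hva) (aux_y_intble' hx hva hua)
        linarith [hadd]
      rw [Real.coe_toNNReal _ (aux_decRearr_nonneg x a), Real.dist_eq, Real.dist_eq, hvu]
      have hb := intervalIntegral.norm_integral_le_of_norm_le_const
        (C := decRearr x a) (f := decRearr x) (a := v) (b := u) ?_
      · simpa [Real.norm_eq_abs, abs_sub_comm u v] using hb
      · intro s hs
        have hs' : v ⊓ u < s ∧ s ≤ v ⊔ u := hs
        have hs1 : a < s := lt_of_le_of_lt (le_inf hv hu) hs'.1
        rw [Real.norm_eq_abs, abs_of_nonneg (aux_decRearr_nonneg x s)]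
        exact aux_decRearr_anti hx (mem_Ioi.2 ha) (mem_Ioi.2 (lt_trans ha hs1)) hs1.le
    exact hlip.continuousOn
  · exact continuousOn_const.congr fun t ht => hz t (lt_of_lt_of_le ha ht)

end Aux2

section Aux3

variable {ψ κ : ℝ → ℝ}

lemma aux_kappa_pos (hκ : MemK κ) {t : ℝ} (ht : 0 < t) : 0 < κ t := by
  have := hκ.1 (mem_Ici.2 le_rfl) (mem_Ici.2 ht.le) ht
  rwa [hκ.2.1] at this

lemma aux_h_pos (hψ : OmegaInf ψ) (hκ : MemK κ) {t : ℝ} (ht : 0 < t) : 0 < ψ (κ t) :=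
  aux_psi_pos hψ (aux_kappa_pos hκ ht)

lemma aux_ratio (hψ : OmegaInf ψ) (hκ : MemK κ)
    (hdiff : ∀ t > (0:ℝ), DifferentiableAt ℝ (fun u => ψ (κ u)) t)
    {C : ℝ} (hder : ∀ t > (0:ℝ), deriv (fun u => ψ (κ u)) t / ψ (κ t) < C / t)
    {u v : ℝ} (hu : 0 < u) (huv : u ≤ v) :
    ψ (κ v) ≤ ψ (κ u) * (v / u) ^ C := by
  have hpos : ∀ s : ℝ, 0 < s → 0 < ψ (κ s) := fun s hs => aux_h_pos hψ hκ hs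
  set G : ℝ → ℝ := fun s => Real.log (ψ (κ s)) - C * Real.log s with hG
  have hderivG : ∀ s ∈ interior (Ioi (0:ℝ)), deriv G s < 0 := by
    rw [interior_Ioi]
    intro s hs
    rw [mem_Ioi] at hs
    have hds : HasDerivAt G (deriv (fun u => ψ (κ u)) s / ψ (κ s) - C * s⁻¹) s := by
      have h1 : HasDerivAt (fun y => Real.log (ψ (κ y)))
          (deriv (fun u => ψ (κ u)) s / ψ (κ s)) s :=
        ((hdiff s hs).hasDerivAt).log (ne_of_gt (hpos s hs))
      have h2 : HasDerivAt (fun y => C * Real.log y) (C * s⁻¹) s :=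
        (Real.hasDerivAt_log (ne_of_gt hs)).const_mul C
      exact h1.sub h2
    rw [hds.deriv]
    have h3 := hder s hs
    rw [div_eq_mul_inv C s] at h3
    linarith
  have hcont : ContinuousOn G (Ioi 0) := by
    intro s hs
    rw [mem_Ioi] at hs
    apply ContinuousAt.continuousWithinAt
    apply ContinuousAt.sub
    · exact ((hdiff s hs).continuousAt).log (ne_of_gt (hpos s hs))
    · exact continuousAt_const.mul (Real.continuousAt_log (ne_of_gt hs))
  have hanti : StrictAntiOn G (Ioi 0) := strictAntiOn_of_deriv_neg (convex_Ioi 0) hcont hderivG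
  have hv : 0 < v := lt_of_lt_of_le hu huv
  have hGle : G v ≤ G u := by
    rcases eq_or_lt_of_le huv with rfl | hlt
    · exact le_rfl
    · exact (hanti (mem_Ioi.2 hu) (mem_Ioi.2 hv) hlt).le
  have hlog : Real.log (ψ (κ v)) ≤ Real.log (ψ (κ u) * (v / u) ^ C) := by
    rw [Real.log_mul (ne_of_gt (hpos u hu))
        (ne_of_gt (Real.rpow_pos_of_pos (div_pos hv hu) C)),
      Real.log_rpow (div_pos hv hu), Real.log_div (ne_of_gt hv) (ne_of_gt hu)]
    simp only [hG] at hGle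
    have hring : C * (Real.log v - Real.log u) = C * Real.log v - C * Real.log u := by ring
    rw [hring]
    linarith
  exact (Real.log_le_log_iff (hpos v hv)
    (mul_pos (hpos u hu) (Real.rpow_pos_of_pos (div_pos hv hu) C))).1 hlog

lemma aux_phiW_nonneg (hψ : OmegaInf ψ) (x : ℝ → ℝ) {t : ℝ} (ht : 0 < t) :
    0 ≤ phiW ψ x t :=
  div_nonneg (aux_F_nonneg x ht.le) (hψ.2.1 t (mem_Ici.2 ht.le))

lemma aux_g_cont (hψ : OmegaInf ψ) (hκ : MemK κ)
    (hdiff : ∀ t > (0:ℝ), DifferentiableAt ℝ (fun u => ψ (κ u)) t)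
    {x : ℝ → ℝ} (hx : Measurable x) :
    ContinuousOn (fun t => phiW ψ x (κ (max t 1))) (Ici 0) := by
  have hκcont : ContinuousOn κ (Ici 0) := hκ.2.2.2.2.1.continuousOn
  have hmax : Continuous fun t : ℝ => max t 1 := continuous_id.max continuous_const
  have hκ1 : 0 < κ 1 := aux_kappa_pos hκ one_pos
  have hmono : MonotoneOn κ (Ici 0) := hκ.1.monotoneOn
  have hmax0 : ∀ t : ℝ, (0:ℝ) ≤ max t 1 := fun t => zero_le_one.trans (le_max_right t 1)
  have hjge : ∀ t : ℝ, κ 1 ≤ κ (max t 1) := fun t =>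
    hmono (mem_Ici.2 zero_le_one) (mem_Ici.2 (hmax0 t)) (le_max_right t 1)
  have hnum : ContinuousOn (fun t => ∫ s in (0:ℝ)..(κ (max t 1)), decRearr x s) (Ici 0) := by
    apply (aux_F_cont hx hκ1).comp
      (hκcont.comp hmax.continuousOn fun t _ => mem_Ici.2 (hmax0 t))
    exact fun t _ => mem_Ici.2 (hjge t)
  have hden : ContinuousOn (fun t => ψ (κ (max t 1))) (Ici 0) := by
    have h1 : ContinuousOn (fun s => ψ (κ s)) (Ioi 0) := fun s hs =>
      ((hdiff s hs).continuousAt).continuousWithinAt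
    exact h1.comp hmax.continuousOn fun t _ =>
      mem_Ioi.2 (lt_of_lt_of_le one_pos (le_max_right t 1))
  simp only [phiW]
  exact hnum.div hden fun t _ =>
    ne_of_gt (aux_h_pos hψ hκ (lt_of_lt_of_le one_pos (le_max_right t 1)))

lemma aux_BL_le_limsup (L : BanachLimitR) {g : ℝ → ℝ} (hcb : IsCb g)
    {Mg : ℝ} (hM : ∀ t : ℝ, g t ≤ Mg) :
    L.toFun g ≤ limsup g atTop := by
  have hbdd : IsBoundedUnder (· ≤ ·) atTop g := isBoundedUnder_of ⟨Mg, hM⟩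
  apply le_of_forall_pos_le_add
  intro ε hε
  set ℓ := limsup g atTop with hℓ
  have hev : ∀ᶠ t in atTop, g t < ℓ + ε :=
    eventually_lt_of_limsup_lt (lt_add_of_pos_right ℓ hε) hbdd
  obtain ⟨s, hs⟩ := eventually_atTop.1 hev
  set s' := max s 0 with hs'def
  have hs'0 : (0:ℝ) ≤ s' := le_max_right s 0
  have hcbs : IsCb (fun t => g (t + s')) := by
    constructor
    · exact hcb.1.comp (continuous_id.add continuous_const).continuousOn
        fun t ht => by simp only [mem_Ici] at ht ⊢; linarith
    · obtain ⟨M0, hM0⟩ := hcb.2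
      exact ⟨M0, fun t ht => hM0 _ (by simp only [mem_Ici] at ht ⊢; linarith)⟩
  have hcbh : IsCb (fun t => (ℓ + ε) - g (t + s')) := by
    constructor
    · exact continuousOn_const.sub hcbs.1
    · obtain ⟨M0, hM0⟩ := hcbs.2
      refine ⟨|ℓ + ε| + M0, fun t ht => ?_⟩
      have h1 := hM0 t ht
      have h2 : |(ℓ + ε) - g (t + s')| ≤ |ℓ + ε| + |g (t + s')| := abs_sub _ _
      linarith
  have hposL : 0 ≤ L.toFun (fun t => (ℓ + ε) - g (t + s')) := by
    apply L.pos _ hcbh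
    intro t ht
    rw [mem_Ici] at ht
    have : g (t + s') < ℓ + ε := hs (t + s') (by linarith [le_max_left s 0])
    linarith
  have hadd := L.map_add (fun t => (ℓ + ε) - g (t + s')) (fun t => g (t + s')) hcbh hcbs
  have hconst : L.toFun (fun _ : ℝ => ℓ + ε) = ℓ + ε := by
    have h1 := L.map_smul (ℓ + ε) (fun _ => 1)
      ⟨continuousOn_const, 1, fun t _ => by norm_num⟩
    simpa [L.map_one] using h1
  have hshift := L.shift_inv g hcb s' hs'0
  have heq : (fun t => ((ℓ + ε) - g (t + s')) + g (t + s')) = (fun _ : ℝ => ℓ + ε) := by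
    funext t; ring
  rw [heq, hconst] at hadd
  linarith

end Aux3



/-- for `κ ∈ D(ψ)` and a set `Λ` of Banach limits with the Cesàro
limit property, the seminorm `sup_{L∈Λ} f_{L,κ}(x)` is equivalent to the Riesz
seminorm `ρ₁(x) = limsup φ(x)`. -/
theorem riesz_seminorm_equivalence (ψ κ : ℝ → ℝ) (hψ : OmegaInf ψ) (hκ : MemK κ)
    (hD : DominatedGrowth ψ κ) (Λ : Set BanachLimitR) (hΛ : CesaroLimitProp Λ) :
    ∃ c : ℝ, 0 < c ∧ c < 1 ∧ ∀ x : ℝ → ℝ, MemM ψ x →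
      c * limsup (phiW ψ x) atTop ≤ sSup {r : ℝ | ∃ L ∈ Λ, r = fL L ψ κ x} ∧
      sSup {r : ℝ | ∃ L ∈ Λ, r = fL L ψ κ x} ≤ limsup (phiW ψ x) atTop := by
  obtain ⟨hdiff, C, hC, hder⟩ := hD
  have h2C : (0:ℝ) < (2:ℝ) ^ C := Real.rpow_pos_of_pos two_pos C
  have h2C1 : (1:ℝ) ≤ (2:ℝ) ^ C := Real.one_le_rpow one_le_two hC.le
  refine ⟨1 / (2 * 2 ^ C), by positivity, ?_, ?_⟩
  · rw [div_lt_one (by positivity)]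
    linarith
  intro x hx
  obtain ⟨hxm, M, hM⟩ := hx
  set g : ℝ → ℝ := fun t => phiW ψ x (κ (max t 1)) with hgdef
  have hmax1 : ∀ t : ℝ, (0:ℝ) < max t 1 := fun t => lt_of_lt_of_le one_pos (le_max_right t 1)
  have hκmax : ∀ t : ℝ, 0 < κ (max t 1) := fun t => aux_kappa_pos hκ (hmax1 t)
  have hg0 : ∀ t : ℝ, 0 ≤ g t := fun t => aux_phiW_nonneg hψ x (hκmax t)
  set M' := max M 0 with hM'def
  have hM'0 : (0:ℝ) ≤ M' := le_max_right M 0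
  have hgM : ∀ t : ℝ, g t ≤ M' := fun t => le_trans (hM _ (hκmax t)) (le_max_left M 0)
  have hgcb : IsCb g := ⟨aux_g_cont hψ hκ hdiff hxm,
    M', fun t _ => abs_le.2 ⟨by linarith [hg0 t], hgM t⟩⟩
  have hyev0 : ∀ᶠ t in atTop, 0 ≤ phiW ψ x t :=
    eventually_atTop.2 ⟨1, fun t ht => aux_phiW_nonneg hψ x (lt_of_lt_of_le one_pos ht)⟩
  have hyevM : ∀ᶠ t in atTop, phiW ψ x t ≤ M' :=
    eventually_atTop.2 ⟨1, fun t ht =>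
      le_trans (hM t (lt_of_lt_of_le one_pos ht)) (le_max_left M 0)⟩
  have hybdd : IsBoundedUnder (· ≤ ·) atTop (phiW ψ x) :=
    isBoundedUnder_of_eventually_le hyevM
  set ℓ := limsup (phiW ψ x) atTop with hℓdef
  have hj : Tendsto (fun t : ℝ => κ (max t 1)) atTop atTop := by
    apply hκ.2.2.2.2.2.comp
    exact tendsto_atTop_mono (fun t : ℝ => le_max_left t 1) tendsto_id
  have hgls : limsup g atTop ≤ ℓ := by
    have hmap : map (fun t : ℝ => κ (max t 1)) atTop ≤ atTop := hj
    have hco : IsCoboundedUnder (· ≤ ·) (map (fun t : ℝ => κ (max t 1)) atTop) (phiW ψ x) := by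
      apply IsBoundedUnder.isCoboundedUnder_le
      apply isBoundedUnder_of_eventually_ge (a := (0:ℝ))
      rw [eventually_map]
      exact Eventually.of_forall fun t => hg0 t
    have h1 := limsup_le_limsup_of_le hmap hco hybdd
    rw [← limsup_comp] at h1
    exact h1
  have hub : ∀ r ∈ {r : ℝ | ∃ L ∈ Λ, r = fL L ψ κ x}, r ≤ ℓ := by
    rintro r ⟨L, hLΛ, rfl⟩
    exact le_trans (aux_BL_le_limsup L hgcb hgM) hgls
  obtain ⟨L0, hL0Λ, hL0⟩ := (hΛ g hgcb).2
  have hmem : fL L0 ψ κ x ∈ {r : ℝ | ∃ L ∈ Λ, r = fL L ψ κ x} := ⟨L0, hL0Λ, rfl⟩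
  have hbddS : BddAbove {r : ℝ | ∃ L ∈ Λ, r = fL L ψ κ x} := ⟨ℓ, fun r hr => hub r hr⟩
  constructor
  · -- lower bound
    have hcesbdd : IsBoundedUnder (· ≤ ·) atTop (cesaro g) := by
      apply isBoundedUnder_of_eventually_le (a := M')
      rw [eventually_atTop]
      refine ⟨1, fun μ hμ => ?_⟩
      have hμ0 : (0:ℝ) < μ := lt_of_lt_of_le one_pos hμ
      rw [cesaro, if_neg (ne_of_gt hμ0), div_le_iff₀ hμ0]
      have hb := intervalIntegral.norm_integral_le_of_norm_le_const
        (C := M') (f := g) (a := 0) (b := μ) ?_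
      · rw [Real.norm_eq_abs] at hb
        calc (∫ s in (0:ℝ)..μ, g s) ≤ |∫ s in (0:ℝ)..μ, g s| := le_abs_self _
          _ ≤ M' * |μ - 0| := hb
          _ = M' * μ := by rw [sub_zero, abs_of_pos hμ0]
      · intro s hs
        rw [Real.norm_eq_abs, abs_of_nonneg (hg0 s)]
        exact hgM s
    have hgint : ∀ p q : ℝ, 0 ≤ p → 0 ≤ q → IntervalIntegrable g volume p q := by
      intro p q hp hq
      apply ContinuousOn.intervalIntegrable
      apply (aux_g_cont hψ hκ hdiff hxm).mono
      intro s hs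
      rcases mem_uIcc.1 hs with h | h
      · exact mem_Ici.2 (le_trans hp h.1)
      · exact mem_Ici.2 (le_trans hq h.1)
    have hkey : ∀ ε > (0:ℝ), (ℓ - ε) / (2 * 2 ^ C) ≤ limsup (cesaro g) atTop := by
      intro ε hε
      have hyco : IsCoboundedUnder (· ≤ ·) atTop (phiW ψ x) :=
        IsBoundedUnder.isCoboundedUnder_le (isBoundedUnder_of_eventually_ge hyev0)
      have hfreq : ∃ᶠ t in atTop, ℓ - ε < phiW ψ x t :=
        frequently_lt_of_lt_limsup hyco (by linarith)
      apply le_limsup_of_frequently_le ?_ hcesbdd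
      rw [frequently_atTop]
      intro n
      obtain ⟨t₀, ht₀ge, ht₀⟩ := frequently_atTop.1 hfreq (κ (max n 1))
      have hn1 : (0:ℝ) < max n 1 := lt_of_lt_of_le one_pos (le_max_right n 1)
      have ht₀0 : (0:ℝ) ≤ t₀ := le_trans (aux_kappa_pos hκ hn1).le ht₀ge
      obtain ⟨u₀, hu₀0, hu₀⟩ := hκ.2.2.2.1 (mem_Ici.2 ht₀0)
      rw [mem_Ici] at hu₀0
      have hu₀n : max n 1 ≤ u₀ := by
        by_contra hcon
        push_neg at hcon
        have hlt := hκ.1 (mem_Ici.2 hu₀0) (mem_Ici.2 hn1.le) hcon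
        rw [hu₀] at hlt
        linarith
      have hu₀1 : (1:ℝ) ≤ u₀ := le_trans (le_max_right n 1) hu₀n
      have hu₀pos : (0:ℝ) < u₀ := lt_of_lt_of_le one_pos hu₀1
      have h2u₀ : (0:ℝ) < 2 * u₀ := by linarith
      refine ⟨2 * u₀, by linarith [le_max_left n 1], ?_⟩
      have hpt : ∀ u ∈ Icc u₀ (2 * u₀), (ℓ - ε) / 2 ^ C ≤ g u := by
        intro u hu
        have hu1 : (1:ℝ) ≤ u := le_trans hu₀1 hu.1
        have hupos : (0:ℝ) < u := lt_of_lt_of_le one_pos hu1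
        have hgu : g u = phiW ψ x (κ u) := by
          rw [hgdef]; simp [max_eq_left hu1]
        rw [hgu]
        simp only [phiW]
        have hratio : ψ (κ u) ≤ ψ (κ u₀) * (u / u₀) ^ C :=
          aux_ratio hψ hκ hdiff hder hu₀pos hu.1
        have huu : u / u₀ ≤ 2 := by rw [div_le_iff₀ hu₀pos]; linarith [hu.2]
        have hrle : (u / u₀ : ℝ) ^ C ≤ 2 ^ C :=
          Real.rpow_le_rpow (by positivity) huu hC.le
        have hψu₀ : 0 < ψ (κ u₀) := aux_h_pos hψ hκ hu₀pos
        have hψu : 0 < ψ (κ u) := aux_h_pos hψ hκ hupos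
        have hFmono : (∫ s in (0:ℝ)..(κ u₀), decRearr x s)
            ≤ ∫ s in (0:ℝ)..(κ u), decRearr x s :=
          aux_F_mono hxm (aux_kappa_pos hκ hu₀pos)
            (hκ.1.monotoneOn (mem_Ici.2 hu₀0) (mem_Ici.2 hupos.le) hu.1)
        have hch : (∫ s in (0:ℝ)..(κ u₀), decRearr x s) / (ψ (κ u₀) * 2 ^ C)
            ≤ (∫ s in (0:ℝ)..(κ u), decRearr x s) / ψ (κ u) :=
          div_le_div₀ (le_trans (aux_F_nonneg x (aux_kappa_pos hκ hu₀pos).le) hFmono)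
            hFmono hψu
            (hratio.trans (mul_le_mul_of_nonneg_left hrle hψu₀.le))
        have hphi0 : ℓ - ε ≤ phiW ψ x (κ u₀) := by rw [hu₀]; exact ht₀.le
        have hphi : (ℓ - ε) / 2 ^ C
            ≤ (∫ s in (0:ℝ)..(κ u₀), decRearr x s) / (ψ (κ u₀) * 2 ^ C) := by
          rw [← div_div]
          apply (div_le_div_iff_of_pos_right h2C).2
          simpa [phiW] using hphi0
        exact le_trans hphi hch
      have hadd := intervalIntegral.integral_add_adjacent_intervals
        (hgint 0 u₀ le_rfl hu₀pos.le) (hgint u₀ (2*u₀) hu₀pos.le h2u₀.le)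
      have hI1 : 0 ≤ ∫ s in (0:ℝ)..u₀, g s :=
        intervalIntegral.integral_nonneg hu₀pos.le fun s _ => hg0 s
      have hI2 : u₀ * ((ℓ - ε) / 2 ^ C) ≤ ∫ s in u₀..(2*u₀), g s := by
        have hconst : (∫ _ in u₀..(2*u₀), ((ℓ - ε) / 2 ^ C)) = u₀ * ((ℓ - ε)/2^C) := by
          rw [intervalIntegral.integral_const]
          rw [smul_eq_mul]
          ring_nf
        rw [← hconst]
        exact intervalIntegral.integral_mono_on (by linarith)
          intervalIntegrable_const (hgint u₀ (2*u₀) hu₀pos.le h2u₀.le) hpt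
      rw [cesaro, if_neg (ne_of_gt h2u₀), ← hadd, le_div_iff₀ h2u₀]
      have heq3 : (ℓ - ε) / (2 * 2 ^ C) * (2 * u₀) = u₀ * ((ℓ - ε) / 2 ^ C) := by
        field_simp
      rw [heq3]
      linarith
    have hLeq : limsup (cesaro g) atTop ≤ sSup {r : ℝ | ∃ L ∈ Λ, r = fL L ψ κ x} := by
      rw [← hL0]
      exact le_csSup hbddS hmem
    have hfinal : ℓ / (2 * 2 ^ C) ≤ sSup {r : ℝ | ∃ L ∈ Λ, r = fL L ψ κ x} := by
      apply le_of_forall_pos_le_add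
      intro δ hδ
      have hε : (0:ℝ) < δ * (2 * 2 ^ C) := by positivity
      have h5 := (hkey _ hε).trans hLeq
      have heq2 : (ℓ - δ * (2 * 2 ^ C)) / (2 * 2 ^ C) = ℓ / (2 * 2 ^ C) - δ := by
        field_simp
      linarith
    calc 1 / (2 * 2 ^ C) * ℓ = ℓ / (2 * 2 ^ C) := by ring
      _ ≤ _ := hfinal
  · exact csSup_le ⟨_, hmem⟩ hub
end
end

section
/- Let D(ℝ₊) denote the set of dilation-invariant elements of SC_b*([0,∞)). Then: (a) for every ω ∈ D(ℝ₊) there exists a Banach limit L ∈ BL(ℝ₊) such that L(t ↦ g(e^t)) = ω(g) for all g ∈ C_b([0,∞)); and (b) for every Banach limit L ∈ BL(ℝ₊), the formula ω(g) := L(t ↦ g(e^t)) defines an element of D(ℝ₊), i.e. a positive linear functional on C_b([0,∞)) with ω(1) = 1, vanishing on C₀([0,∞)), and satisfying ω(D_a g) = ω(g) for all a > 0. -/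
open MeasureTheory Filter Set

noncomputable section

lemma isCb_const (c : ℝ) : IsCb (fun _ => c) :=
  ⟨continuousOn_const, |c|, fun _ _ => le_refl _⟩

lemma IsCb.add' {f g : ℝ → ℝ} (hf : IsCb f) (hg : IsCb g) :
    IsCb (fun t => f t + g t) := by
  obtain ⟨Mf, hMf⟩ := hf.2
  obtain ⟨Mg, hMg⟩ := hg.2
  exact ⟨hf.1.add hg.1, Mf + Mg, fun t ht =>
    (abs_add_le _ _).trans (add_le_add (hMf t ht) (hMg t ht))⟩

lemma IsCb.smul' (c : ℝ) {f : ℝ → ℝ} (hf : IsCb f) :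
    IsCb (fun t => c * f t) := by
  obtain ⟨M, hM⟩ := hf.2
  exact ⟨hf.1.const_smul c, |c| * M, fun t ht => by
    rw [abs_mul]
    exact mul_le_mul_of_nonneg_left (hM t ht) (abs_nonneg c)⟩

lemma IsCb.compPhi {f : ℝ → ℝ} (hf : IsCb f) {φ : ℝ → ℝ}
    (hφ : ContinuousOn φ (Ici 0)) (hm : ∀ t ∈ Ici (0:ℝ), φ t ∈ Ici (0:ℝ)) :
    IsCb (fun t => f (φ t)) := by
  obtain ⟨M, hM⟩ := hf.2
  exact ⟨hf.1.comp hφ hm, M, fun t ht => hM _ (hm t ht)⟩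

lemma contOn_logmax : ContinuousOn (fun u : ℝ => Real.log (max u 1)) (Ici 0) := by
  apply Real.continuousOn_log.comp ((continuous_id.max continuous_const).continuousOn)
  intro u _
  exact ne_of_gt (lt_of_lt_of_le one_pos (le_max_right u 1))

lemma logmax_mem (u : ℝ) (_ : u ∈ Ici (0:ℝ)) :
    Real.log (max u 1) ∈ Ici (0:ℝ) := Real.log_nonneg (le_max_right u 1)

lemma exp_mem (t : ℝ) (_ : t ∈ Ici (0:ℝ)) : Real.exp t ∈ Ici (0:ℝ) :=
  (Real.exp_pos t).le

/-- ω vanishes on differences of eventually-equal bounded continuous functions. -/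
lemma scb_congr (ω : SCbStar) {f g : ℝ → ℝ} (hf : IsCb f) (hg : IsCb g)
    (h : ∀ᶠ u in atTop, f u = g u) : ω.toFun f = ω.toFun g := by
  set d : ℝ → ℝ := fun u => f u + (-1) * g u with hd
  have hdcb : IsCb d := hf.add' (hg.smul' (-1))
  have hd0 : Tendsto d atTop (nhds 0) := by
    apply Tendsto.congr' _ tendsto_const_nhds
    filter_upwards [h] with u hu
    simp [d, hu]
  have hvan : ω.toFun d = 0 := ω.vanish d hdcb hd0
  have key : ω.toFun f = ω.toFun g + ω.toFun d := by
    have h1 : f = fun u => g u + d u := by funext u; simp only [d]; ring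
    rw [h1]; exact ω.map_add g d hg hdcb
  rw [key, hvan, add_zero]

lemma bl_const (L : BanachLimitR) (c : ℝ) : L.toFun (fun _ => c) = c := by
  have := L.map_smul c (fun _ => 1) (isCb_const 1)
  simpa [L.map_one] using this

lemma bl_abs_le (L : BanachLimitR) {f : ℝ → ℝ} (hf : IsCb f) {ε : ℝ}
    (hb : ∀ t ∈ Ici (0:ℝ), |f t| ≤ ε) : |L.toFun f| ≤ ε := by
  have h1 : L.toFun (fun t => ε + (-1) * f t) = ε + (-1) * L.toFun f := by
    rw [L.map_add (fun _ => ε) (fun t => (-1) * f t) (isCb_const ε) (hf.smul' (-1)),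
      bl_const, L.map_smul (-1) f hf]
  have h2 : L.toFun (fun t => ε + 1 * f t) = ε + 1 * L.toFun f := by
    rw [L.map_add (fun _ => ε) (fun t => 1 * f t) (isCb_const ε) (hf.smul' 1),
      bl_const, L.map_smul 1 f hf]
  have p1 : 0 ≤ L.toFun (fun t => ε + (-1) * f t) := by
    apply L.pos _ ((isCb_const ε).add' (hf.smul' (-1)))
    intro t ht
    have := (abs_le.mp (hb t ht)).2
    linarith
  have p2 : 0 ≤ L.toFun (fun t => ε + 1 * f t) := by
    apply L.pos _ ((isCb_const ε).add' (hf.smul' 1))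
    intro t ht
    have := (abs_le.mp (hb t ht)).1
    linarith
  rw [h1] at p1; rw [h2] at p2
  rw [abs_le]; constructor <;> linarith

/-- A Banach limit on `C_b` kills `C₀` functions composed with `exp`. -/
lemma bl_vanish_exp (L : BanachLimitR) {f : ℝ → ℝ} (hf : IsCb f)
    (h0 : Tendsto f atTop (nhds 0)) :
    L.toFun (fun t => f (Real.exp t)) = 0 := by
  have hce : IsCb (fun t => f (Real.exp t)) :=
    hf.compPhi Real.continuous_exp.continuousOn exp_mem
  by_contra hne
  set x := L.toFun (fun t => f (Real.exp t)) with hx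
  have hxp : 0 < |x| := abs_pos.mpr hne
  set ε := |x| / 2 with hε
  have hεp : 0 < ε := by positivity
  obtain ⟨R, hR⟩ := (Metric.tendsto_atTop.mp h0) ε hεp
  set s := max R 0 with hs
  have hs0 : 0 ≤ s := le_max_right R 0
  have hbnd : ∀ t ∈ Ici (0:ℝ), |f (Real.exp (t + s))| ≤ ε := by
    intro t ht
    have hRle : R ≤ Real.exp (t + s) := by
      have h1 : s + 1 ≤ Real.exp s := by
        have := Real.add_one_le_exp s; linarith
      have h2 : Real.exp s ≤ Real.exp (t + s) :=
        Real.exp_le_exp.mpr (by simp at ht ⊢; linarith)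
      have h3 : R ≤ s := le_max_left R 0
      linarith
    have := hR (Real.exp (t + s)) hRle
    rw [Real.dist_eq, sub_zero] at this
    exact this.le
  have hshift : L.toFun (fun t => f (Real.exp (t + s))) = x := by
    have := L.shift_inv (fun t => f (Real.exp t)) hce s hs0
    simpa using this
  have hcb2 : IsCb (fun t => f (Real.exp (t + s))) := by
    apply hf.compPhi
    · exact (Real.continuous_exp.comp (continuous_id.add continuous_const)).continuousOn
    · intro t _; exact (Real.exp_pos _).le
  have := bl_abs_le L hcb2 hbnd
  rw [hshift] at this
  rw [hε] at this
  linarith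

/-- dilation-invariant states on `C_b([0,∞))` (vanishing on
`C₀`) correspond to Banach limits via composition with `exp`. -/
theorem dilation_invariant_iff_banachLimit_exp :
    (∀ ω : SCbStar, DilationInvariant ω →
      ∃ L : BanachLimitR, ∀ g : ℝ → ℝ, IsCb g →
        L.toFun (fun t => g (Real.exp t)) = ω.toFun g) ∧
    (∀ L : BanachLimitR, ∃ ω : SCbStar,
      DilationInvariant ω ∧ ∀ g : ℝ → ℝ, ω.toFun g = L.toFun (fun t => g (Real.exp t))) := by
  constructor
  · -- Part (a): from a dilation-invariant state to a Banach limit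
    intro ω hdil
    refine ⟨{
      toFun := fun f => ω.toFun (fun u => f (Real.log (max u 1)))
      map_add := fun f g hf hg =>
        ω.map_add _ _ (hf.compPhi contOn_logmax logmax_mem)
          (hg.compPhi contOn_logmax logmax_mem)
      map_smul := fun c f hf => ω.map_smul c _ (hf.compPhi contOn_logmax logmax_mem)
      pos := fun f hf hp =>
        ω.pos _ (hf.compPhi contOn_logmax logmax_mem)
          (fun u hu => hp _ (logmax_mem u hu))
      map_one := ω.map_one
      shift_inv := ?_ }, ?_⟩
    · -- shift invariance
      intro f hf s hs
      have hcbh : IsCb (fun u => f (Real.log (max u 1))) :=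
        hf.compPhi contOn_logmax logmax_mem
      have hcb1 : IsCb (fun u => f (Real.log (max u 1) + s)) := by
        apply hf.compPhi (contOn_logmax.add continuousOn_const)
        intro u hu
        have := logmax_mem u hu
        simp only [mem_Ici, Pi.add_apply] at this ⊢
        linarith
      have hcont2 : ContinuousOn (fun u : ℝ => Real.log (max (Real.exp s * u) 1)) (Ici 0) := by
        apply Real.continuousOn_log.comp
          (((continuous_const.mul continuous_id).max continuous_const).continuousOn)
        intro u _
        exact ne_of_gt (lt_of_lt_of_le one_pos (le_max_right _ 1))
      have hcb2 : IsCb (fun u => f (Real.log (max (Real.exp s * u) 1))) := by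
        apply hf.compPhi hcont2
        intro u _
        exact Real.log_nonneg (le_max_right _ 1)
      have heq : ∀ᶠ u in atTop, f (Real.log (max u 1) + s)
          = f (Real.log (max (Real.exp s * u) 1)) := by
        filter_upwards [eventually_ge_atTop (1:ℝ)] with u hu
        have h1 : max u 1 = u := max_eq_left hu
        have hu0 : (0:ℝ) < u := lt_of_lt_of_le one_pos hu
        have hes : (1:ℝ) ≤ Real.exp s := Real.one_le_exp hs
        have h2 : max (Real.exp s * u) 1 = Real.exp s * u := by
          apply max_eq_left
          calc (1:ℝ) ≤ u := hu
          _ = 1 * u := (one_mul u).symm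
          _ ≤ Real.exp s * u := by nlinarith
        rw [h1, h2, Real.log_mul (Real.exp_ne_zero s) (ne_of_gt hu0), Real.log_exp]
        ring_nf
      have step1 : ω.toFun (fun u => f (Real.log (max u 1) + s))
          = ω.toFun (fun u => f (Real.log (max (Real.exp s * u) 1))) :=
        scb_congr ω hcb1 hcb2 heq
      have step2 : ω.toFun (fun u => f (Real.log (max (Real.exp s * u) 1)))
          = ω.toFun (fun u => f (Real.log (max u 1))) :=
        hdil _ hcbh (Real.exp s) (Real.exp_pos s)
      exact step1.trans step2
    · -- the defining property
      intro g hg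
      show ω.toFun (fun u => g (Real.exp (Real.log (max u 1)))) = ω.toFun g
      have hcb : IsCb (fun u => g (Real.exp (Real.log (max u 1)))) := by
        apply hg.compPhi (Real.continuous_exp.comp_continuousOn contOn_logmax)
        intro u _
        exact (Real.exp_pos _).le
      apply scb_congr ω hcb hg
      filter_upwards [eventually_ge_atTop (1:ℝ)] with u hu
      have hu0 : (0:ℝ) < u := lt_of_lt_of_le one_pos hu
      rw [max_eq_left hu, Real.exp_log hu0]
  · -- Part (b): from a Banach limit to a dilation-invariant state
    intro L
    refine ⟨{
      toFun := fun g => L.toFun (fun t => g (Real.exp t))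
      map_add := fun f g hf hg =>
        L.map_add _ _ (hf.compPhi Real.continuous_exp.continuousOn exp_mem)
          (hg.compPhi Real.continuous_exp.continuousOn exp_mem)
      map_smul := fun c f hf =>
        L.map_smul c _ (hf.compPhi Real.continuous_exp.continuousOn exp_mem)
      pos := fun f hf hp =>
        L.pos _ (hf.compPhi Real.continuous_exp.continuousOn exp_mem)
          (fun t ht => hp _ (exp_mem t ht))
      map_one := L.map_one
      vanish := fun f hf h0 => bl_vanish_exp L hf h0 }, ?_, fun g => rfl⟩
    intro g hg a ha
    show L.toFun (fun t => g (a * Real.exp t)) = L.toFun (fun t => g (Real.exp t))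
    have hcbe : IsCb (fun t => g (Real.exp t)) :=
      hg.compPhi Real.continuous_exp.continuousOn exp_mem
    rcases le_or_gt 0 (Real.log a) with hs | hs
    · have hfe : (fun t => g (a * Real.exp t)) = fun t => g (Real.exp (t + Real.log a)) := by
        funext t
        rw [Real.exp_add, Real.exp_log ha, mul_comm]
      rw [hfe]
      exact L.shift_inv _ hcbe (Real.log a) hs
    · set s' := -Real.log a with hs'
      have hs'0 : 0 ≤ s' := by simp [hs']; linarith
      have hcba : IsCb (fun t => g (a * Real.exp t)) := by
        apply hg.compPhi ((continuous_const.mul Real.continuous_exp).continuousOn)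
        intro t _
        exact mul_nonneg ha.le (Real.exp_pos t).le
      have := L.shift_inv (fun t => g (a * Real.exp t)) hcba s' hs'0
      have hfe : (fun t => g (a * Real.exp (t + s'))) = fun t => g (Real.exp t) := by
        funext t
        congr 1
        rw [hs', Real.exp_add, Real.exp_neg, Real.exp_log ha]
        field_simp
      rw [hfe] at this
      exact this.symm
end
end
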